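/- arXiv:2102.08149 — 4 statements merged into one kernel-verified Lean document; each statement's English description precedes it below -/
import Mathlib

section
/- Fix a ∈ (0, π/3) and a function q : ℝ → ℂ, square-integrable on (0, π), with q(x) = 0 for all x outside (a, π) and q(x) = 0 for almost every x ∈ (3a, π). Fix ρ ∈ ℂ, ρ ≠ 0, λ = ρ². Let ω = ∫_a^π q(t) dt. For ν ∈ {0,1} define Q_ν(x) = (∫_{x+a/2}^{3a} q(t) dt)(∫_a^{x−a/2} q(τ) dτ) − (−1)^ν ∫_a^{7a/2−x} q(t) (∫_{x+t−a/2}^{3a} q(τ) dτ) dt for x ∈ (3a/2, 5a/2), and set w_ν(x) = q(x) for x ∈ (a, 3a/2) ∪ (5a/2, 3a) and w_ν(x) = q(x) + Q_ν(x) for x ∈ (3a/2, 5a/2). Let y_{0,0}(x,λ) = cos(ρx), y_{1,0}(x,λ) = sin(ρx)/ρ, y_{μ,k}(x,λ) = ∫_a^x (sin ρ(x−t)/ρ) q(t) y_{μ,k−1}(t−a, λ) dt for k = 1, 2, and Y_μ(x,λ) = y_{μ,0}(x,λ) + y_{μ,1}(x,λ) + y_{μ,2}(x,λ) for μ ∈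 {0,1}. Then for every ν ∈ {0,1} and j = 1 − ν, the quantity Δ_{ν,j}(λ), defined as the derivative at x = π of x ↦ Y_1(x,λ) when (ν,j) = (0,1) and as Y_0(π,λ) when (ν,j) = (1,0), satisfies Δ_{ν,j}(λ) = cos(ρπ) + ω sin(ρ(π−a))/(2ρ) + ((−1)^j/(2ρ)) ∫_a^{3a} w_ν(x) sin(ρ(π−2x+a)) dx. -/
set_option linter.unusedVariables false
set_option linter.unusedSectionVars false
set_option maxHeartbeats 1000000


open MeasureTheory Set
open scoped Real

noncomputable def y0 (ρ : ℂ) (ν : ℕ) (x : ℝ) : ℂ :=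
  if ν = 0 then Complex.cos (ρ * (x : ℂ)) else Complex.sin (ρ * (x : ℂ)) / ρ

noncomputable def ySeq (a : ℝ) (q : ℝ → ℂ) (ρ : ℂ) (ν : ℕ) : ℕ → ℝ → ℂ
  | 0 => y0 ρ ν
  | k + 1 => fun x => ∫ t in a..x,
      (Complex.sin (ρ * ((x - t : ℝ) : ℂ)) / ρ) * q t * ySeq a q ρ ν k (t - a)
noncomputable def Yfun (a : ℝ) (q : ℝ → ℂ) (ρ : ℂ) (ν : ℕ) (x : ℝ) : ℂ :=
  ySeq a q ρ ν 0 x + ySeq a q ρ ν 1 x + ySeq a q ρ ν 2 x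

noncomputable def Qfun (a : ℝ) (q : ℝ → ℂ) (ν : ℕ) (x : ℝ) : ℂ :=
  (∫ t in (x + a / 2)..(3 * a), q t) * (∫ τ in a..(x - a / 2), q τ)
    - (-1) ^ ν * ∫ t in a..(7 * a / 2 - x), q t * (∫ τ in (x + t - a / 2)..(3 * a), q τ)

noncomputable def wfun (a : ℝ) (q : ℝ → ℂ) (ν : ℕ) (x : ℝ) : ℂ :=
  if x ∈ Set.Ioo (3 * a / 2) (5 * a / 2) then q x + Qfun a q ν x else q x

noncomputable def qt (a : ℝ) (q : ℝ → ℂ) : ℝ → ℂ := (Set.Ioo a (3*a)).indicator q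
noncomputable def sn (ρ : ℂ) (x : ℝ) : ℂ := Complex.sin (ρ * (x : ℂ))
noncomputable def cn (ρ : ℂ) (x : ℝ) : ℂ := Complex.cos (ρ * (x : ℂ))

lemma sncont (ρ : ℂ) : Continuous (sn ρ) := by
  unfold sn; exact Complex.continuous_sin.comp (continuous_const.mul Complex.continuous_ofReal)
lemma cncont (ρ : ℂ) : Continuous (cn ρ) := by
  unfold cn; exact Complex.continuous_cos.comp (continuous_const.mul Complex.continuous_ofReal)

lemma trig3a (A B C : ℂ) : Complex.sin A * Complex.sin B * Complex.cos C
    = (Complex.cos (A-B+C) + Complex.cos (A-B-C) - Complex.cos (A+B+C) - Complex.cos (A+B-C))/4 := by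
  simp only [Complex.cos_add, Complex.cos_sub, Complex.sin_add, Complex.sin_sub]; ring
lemma trig3b (A B C : ℂ) : Complex.cos A * Complex.sin B * Complex.sin C
    = (Complex.cos (A-B+C) + Complex.cos (A+B-C) - Complex.cos (A-B-C) - Complex.cos (A+B+C))/4 := by
  simp only [Complex.cos_add, Complex.cos_sub, Complex.sin_add, Complex.sin_sub]; ring
lemma trig2a (A B : ℂ) : Complex.sin A * Complex.cos B = (Complex.sin (A+B) + Complex.sin (A-B))/2 := by
  simp only [Complex.sin_add, Complex.sin_sub]; ring
lemma trig2b (A B : ℂ) : Complex.cos A * Complex.sin B = (Complex.sin (A+B) - Complex.sin (A-B))/2 := by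
  simp only [Complex.sin_add, Complex.sin_sub]; ring

/-- antiderivative of the x-kernel -/
lemma integral_sn (a : ℝ) (ρ : ℂ) (hρ : ρ ≠ 0) (u v : ℝ) :
    ∫ x in u..v, sn ρ (π - 2*x + a) = (cn ρ (π - 2*v + a) - cn ρ (π - 2*u + a))/(2*ρ) := by
  have key : ∀ x : ℝ, HasDerivAt (fun y : ℝ => Complex.cos (ρ*(π:ℂ) + ρ*(a:ℂ) - 2*ρ*(y:ℂ))/(2*ρ))
      (sn ρ (π - 2*x + a)) x := by
    intro x
    have h1 : HasDerivAt (fun z : ℂ => ρ*(π:ℂ) + ρ*(a:ℂ) - 2*ρ*z) (-(2*ρ)) x := by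
      simpa using ((hasDerivAt_id (x:ℂ)).const_mul (2*ρ)).const_sub (ρ*(π:ℂ) + ρ*(a:ℂ))
    have h2 := (h1.ccos).div_const (2*ρ)
    have h3 := h2.comp_ofReal
    have harg : ρ * ((π - 2*x + a : ℝ) : ℂ) = ρ*(π:ℂ) + ρ*(a:ℂ) - 2*ρ*(x:ℂ) := by
      push_cast; ring
    have h4 : sn ρ (π - 2*x + a)
        = -Complex.sin (ρ*(π:ℂ) + ρ*(a:ℂ) - 2*ρ*(x:ℂ)) * -(2*ρ) / (2*ρ) := by
      unfold sn; rw [harg]; field_simp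
    rw [h4]; exact h3
  rw [intervalIntegral.integral_eq_sub_of_hasDerivAt (fun x _ => key x)
      (((sncont ρ).comp (by continuity)).intervalIntegrable u v)]
  unfold cn; push_cast; ring

/-- interval integral of a function supported in `Ioo lo hi` equals total integral -/
lemma intervalIntegral_eq_integral {g : ℝ → ℂ} {lo hi : ℝ} (hle : lo ≤ hi)
    (hsupp : ∀ x, x ∉ Set.Ioo lo hi → g x = 0) :
    ∫ x in lo..hi, g x = ∫ x, g x := by
  rw [intervalIntegral.integral_of_le hle, ← MeasureTheory.integral_indicator measurableSet_Ioc]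
  congr 1; funext x
  by_cases h : x ∈ Set.Ioc lo hi
  · exact Set.indicator_of_mem h _
  · rw [Set.indicator_of_notMem h, hsupp x (fun hx => h (Set.Ioo_subset_Ioc_self hx))]

lemma setInd_eq {a b : ℝ} {g : ℝ → ℂ} (hsupp : ∀ x, x ∉ Set.Ioo a b → g x = 0) (S : Set ℝ) :
    S.indicator g = (S ∩ Set.Ioo a b).indicator g := by
  funext x
  by_cases hS : x ∈ S
  · by_cases hI : x ∈ Set.Ioo a b
    · rw [Set.indicator_of_mem hS, Set.indicator_of_mem (Set.mem_inter hS hI)]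
    · rw [Set.indicator_of_mem hS, Set.indicator_of_notMem (fun h => hI h.2), hsupp x hI]
  · rw [Set.indicator_of_notMem hS, Set.indicator_of_notMem (fun h => hS h.1)]

lemma intRight {a b : ℝ} (ha : 0 < a) (hab : a < b) {g : ℝ → ℂ}
    (hsupp : ∀ x, x ∉ Set.Ioo a b → g x = 0) (c : ℝ) :
    ∫ x in a..c, g x = ∫ x, (Set.Iio c).indicator g x := by
  rw [MeasureTheory.integral_indicator measurableSet_Iio]
  by_cases hc : a ≤ c
  · have hset : Set.Ioo a c ∩ Set.Ioo a b = Set.Iio c ∩ Set.Ioo a b := by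
      ext x; simp only [Set.mem_inter_iff, Set.mem_Ioo, Set.mem_Iio]
      constructor
      · rintro ⟨⟨h1, h2⟩, h3, h4⟩; exact ⟨h2, h3, h4⟩
      · rintro ⟨h1, h2, h3⟩; exact ⟨⟨h2, h1⟩, h2, h3⟩
    rw [intervalIntegral.integral_of_le hc, MeasureTheory.integral_Ioc_eq_integral_Ioo,
      ← MeasureTheory.integral_indicator measurableSet_Ioo,
      ← MeasureTheory.integral_indicator measurableSet_Iio,
      setInd_eq hsupp (Set.Ioo a c), hset, ← setInd_eq hsupp (Set.Iio c)]
  · push_neg at hc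
    have hset1 : Set.Ioc c a ∩ Set.Ioo a b = ∅ := by
      ext x; simp only [Set.mem_inter_iff, Set.mem_Ioo, Set.mem_Ioc, Set.mem_empty_iff_false,
        iff_false, not_and]
      rintro ⟨h1, h2⟩ h3; linarith
    have hset2 : Set.Iio c ∩ Set.Ioo a b = ∅ := by
      ext x; simp only [Set.mem_inter_iff, Set.mem_Ioo, Set.mem_Iio, Set.mem_empty_iff_false,
        iff_false, not_and]
      rintro h1 h2; linarith
    rw [intervalIntegral.integral_symm c a, intervalIntegral.integral_of_le hc.le,
      ← MeasureTheory.integral_indicator measurableSet_Ioc,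
      ← MeasureTheory.integral_indicator measurableSet_Iio,
      setInd_eq hsupp (Set.Ioc c a), setInd_eq hsupp (Set.Iio c), hset1, hset2]
    simp

lemma intLeft {a b : ℝ} (ha : 0 < a) (hab : a < b) {g : ℝ → ℂ}
    (hsupp : ∀ x, x ∉ Set.Ioo a b → g x = 0) (c : ℝ) :
    ∫ x in c..b, g x = ∫ x, (Set.Ioi c).indicator g x := by
  rw [MeasureTheory.integral_indicator measurableSet_Ioi]
  by_cases hc : c ≤ b
  · have hset : Set.Ioo c b ∩ Set.Ioo a b = Set.Ioi c ∩ Set.Ioo a b := by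
      ext x; simp only [Set.mem_inter_iff, Set.mem_Ioo, Set.mem_Ioi]
      constructor
      · rintro ⟨⟨h1, h2⟩, h3, h4⟩; exact ⟨h1, h3, h4⟩
      · rintro ⟨h1, h2, h3⟩; exact ⟨⟨h1, h3⟩, h2, h3⟩
    rw [intervalIntegral.integral_of_le hc, MeasureTheory.integral_Ioc_eq_integral_Ioo,
      ← MeasureTheory.integral_indicator measurableSet_Ioo,
      ← MeasureTheory.integral_indicator measurableSet_Ioi,
      setInd_eq hsupp (Set.Ioo c b), hset, ← setInd_eq hsupp (Set.Ioi c)]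
  · push_neg at hc
    have hset1 : Set.Ioc b c ∩ Set.Ioo a b = ∅ := by
      ext x; simp only [Set.mem_inter_iff, Set.mem_Ioo, Set.mem_Ioc, Set.mem_empty_iff_false,
        iff_false, not_and]
      rintro ⟨h1, h2⟩ h3; linarith
    have hset2 : Set.Ioi c ∩ Set.Ioo a b = ∅ := by
      ext x; simp only [Set.mem_inter_iff, Set.mem_Ioo, Set.mem_Ioi, Set.mem_empty_iff_false,
        iff_false, not_and]
      rintro h1 h2; linarith
    rw [intervalIntegral.integral_symm b c, intervalIntegral.integral_of_le hc.le,
      ← MeasureTheory.integral_indicator measurableSet_Ioc,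
      ← MeasureTheory.integral_indicator measurableSet_Ioi,
      setInd_eq hsupp (Set.Ioc b c), setInd_eq hsupp (Set.Ioi c), hset1, hset2]
    simp

/-! ### Integrability helpers -/

lemma helper_gen {lo hi : ℝ} {f : ℝ → ℂ} (hf : IntegrableOn f (Set.Ioo lo hi))
    (hsupp : ∀ x, x ∉ Set.Ioo lo hi → f x = 0) {G : ℝ → ℂ} (hG : Continuous G) :
    Integrable (fun x => G x * f x) := by
  have h1 : (fun x => G x * f x) = (Set.Ioo lo hi).indicator (fun x => G x * f x) := by
    funext x
    by_cases hx : x ∈ Set.Ioo lo hi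
    · rw [Set.indicator_of_mem hx]
    · rw [Set.indicator_of_notMem hx, hsupp x hx, mul_zero]
  rw [h1, MeasureTheory.integrable_indicator_iff measurableSet_Ioo]
  obtain ⟨C, hC⟩ := (isCompact_Icc (a := lo) (b := hi)).exists_bound_of_continuousOn
    hG.continuousOn
  exact MeasureTheory.Integrable.bdd_mul (c := C) hf hG.aestronglyMeasurable.restrict
    ((MeasureTheory.ae_restrict_iff' measurableSet_Ioo).2
      (Filter.Eventually.of_forall fun x hx => hC x (Set.Ioo_subset_Icc_self hx)))

noncomputable def xw (a : ℝ) (ρ : ℂ) : ℝ → ℂ :=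
  (Set.Ioo (3*a/2) (5*a/2)).indicator (fun x => sn ρ (π - 2*x + a))

lemma xw_int (a : ℝ) (ρ : ℂ) : Integrable (xw a ρ) := by
  unfold xw
  rw [MeasureTheory.integrable_indicator_iff measurableSet_Ioo]
  exact (((sncont ρ).comp (by continuity)).integrableOn_Icc).mono_set Set.Ioo_subset_Icc_self

section Main
variable {a : ℝ} {q : ℝ → ℂ} {ρ : ℂ}

lemma supp_qt (a : ℝ) (q : ℝ → ℂ) : ∀ x, x ∉ Set.Ioo a (3*a) → qt a q x = 0 :=
  fun _ h => Set.indicator_of_notMem h _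

lemma intKer2 (hqt : Integrable (qt a q)) (K : ℝ × ℝ → ℂ) (hK : Continuous K)
    (P : Set (ℝ × ℝ)) (hP : MeasurableSet P) :
    Integrable (fun p : ℝ × ℝ => P.indicator K p * (qt a q p.1 * qt a q p.2))
      (volume.prod volume) := by
  set box : Set (ℝ × ℝ) := Set.Icc a (3*a) ×ˢ Set.Icc a (3*a) with hbox
  have hboxm : MeasurableSet box := measurableSet_Icc.prod measurableSet_Icc
  have heq : (fun p : ℝ × ℝ => P.indicator K p * (qt a q p.1 * qt a q p.2))
      = fun p => (P ∩ box).indicator K p * (qt a q p.1 * qt a q p.2) := by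
    funext p
    by_cases hpb : p ∈ box
    · by_cases hpP : p ∈ P
      · rw [Set.indicator_of_mem hpP, Set.indicator_of_mem (Set.mem_inter hpP hpb)]
      · rw [Set.indicator_of_notMem hpP, Set.indicator_of_notMem (fun h => hpP h.1)]
    · have : qt a q p.1 * qt a q p.2 = 0 := by
        rw [hbox, Set.mem_prod] at hpb
        push_neg at hpb
        by_cases h1 : p.1 ∈ Set.Icc a (3*a)
        · rw [supp_qt a q p.2 (fun h => hpb h1 (Set.Ioo_subset_Icc_self h)), mul_zero]
        · rw [supp_qt a q p.1 (fun h => h1 (Set.Ioo_subset_Icc_self h)), zero_mul]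
      rw [this, mul_zero, mul_zero]
  rw [heq]
  obtain ⟨C, hC⟩ := ((isCompact_Icc (a := a) (b := 3*a)).prod
    (isCompact_Icc (a := a) (b := 3*a))).exists_bound_of_continuousOn hK.continuousOn
  refine MeasureTheory.Integrable.bdd_mul (c := max C 0) ?_ ?_ (Filter.Eventually.of_forall fun p => ?_)
  · exact hqt.mul_prod hqt
  · exact (hK.stronglyMeasurable.indicator (hP.inter hboxm)).aestronglyMeasurable
  · by_cases hp : p ∈ P ∩ box
    · rw [Set.indicator_of_mem hp]
      exact le_max_of_le_left (hC p hp.2)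
    · rw [Set.indicator_of_notMem hp]
      simp

lemma intKer3 (hqt : Integrable (qt a q)) (P : Set (ℝ × ℝ × ℝ)) (hP : MeasurableSet P) :
    Integrable (fun z : ℝ × ℝ × ℝ =>
       P.indicator (fun _ => (1:ℂ)) z * (xw a ρ z.1 * (qt a q z.2.1 * qt a q z.2.2)))
      (volume.prod (volume.prod volume)) := by
  refine MeasureTheory.Integrable.bdd_mul (c := 1) ?_ ?_ (Filter.Eventually.of_forall fun z => ?_)
  · exact (xw_int a ρ).mul_prod (hqt.mul_prod hqt)
  · exact ((stronglyMeasurable_const).indicator hP).aestronglyMeasurable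
  · by_cases hz : z ∈ P
    · rw [Set.indicator_of_mem hz]; simp
    · rw [Set.indicator_of_notMem hz]; simp

end Main




lemma y0cont (ρ : ℂ) (ν : ℕ) : Continuous (y0 ρ ν) := by
  unfold y0
  by_cases h : ν = 0 <;> simp only [h, if_true, if_false, reduceIte] <;> fun_prop

lemma ySeq_one (a : ℝ) (q : ℝ → ℂ) (ρ : ℂ) (ν : ℕ) (x : ℝ) :
    ySeq a q ρ ν 1 x = ∫ t in a..x, (sn ρ (x - t) / ρ) * q t * y0 ρ ν (t - a) := rfl

lemma ySeq_two (a : ℝ) (q : ℝ → ℂ) (ρ : ℂ) (ν : ℕ) (x : ℝ) :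
    ySeq a q ρ ν 2 x = ∫ t in a..x, (sn ρ (x - t) / ρ) * q t * ySeq a q ρ ν 1 (t - a) := rfl

section Main3
variable {a : ℝ} {q : ℝ → ℂ} {ρ : ℂ}

-- standing hypotheses
variable (ha : 0 < a) (hπ : 3*a < π) (hρ : ρ ≠ 0)
  (hqP : IntegrableOn q (Set.Ioo a π)) (hq0 : ∀ x, x ∉ Set.Ioo a π → q x = 0)
  (hae : q =ᵐ[volume] qt a q)

include ha hπ hq0 hqP in
/-- any continuous multiple of `q` is integrable -/
lemma Gq_int {G : ℝ → ℂ} (hG : Continuous G) : Integrable (fun x => G x * q x) :=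
  helper_gen hqP hq0 hG

include ha hπ hq0 hqP in
lemma qt_int : Integrable (qt a q) := by
  have : (fun x => (1:ℂ) * q x) = q := by funext x; rw [one_mul]
  have hq : Integrable q := by rw [← this]; exact Gq_int ha hπ hqP hq0 continuous_const
  exact hq.indicator measurableSet_Ioo

include ha hπ hq0 hqP in
lemma Gqt_int {G : ℝ → ℂ} (hG : Continuous G) : Integrable (fun x => G x * qt a q x) :=
  helper_gen ((qt_int ha hπ hqP hq0).integrableOn) (supp_qt a q) hG

include ha hπ hq0 hqP hae in
/-- truncation at 3a for integrals of `G · q` -/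
lemma tailG {G : ℝ → ℂ} (hG : Continuous G) {x : ℝ} (hx : 3*a ≤ x) :
    ∫ t in a..x, G t * q t = ∫ t in a..(3*a), G t * q t := by
  have hc1 : ∫ t in a..x, G t * q t = ∫ t in a..x, G t * qt a q t := by
    apply intervalIntegral.integral_congr_ae
    filter_upwards [hae] with t ht
    intro _; rw [ht]
  have hc2 : ∫ t in a..(3*a), G t * q t = ∫ t in a..(3*a), G t * qt a q t := by
    apply intervalIntegral.integral_congr_ae
    filter_upwards [hae] with t ht
    intro _; rw [ht]
  have hsupp : ∀ y, y ∉ Set.Ioo a (3*a) → G y * qt a q y = 0 := fun y hy => by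
    rw [supp_qt a q y hy, mul_zero]
  have hsupp2 : ∀ y, y ∉ Set.Ioo a x → G y * qt a q y = 0 := fun y hy => by
    apply hsupp
    intro hmem
    exact hy ⟨hmem.1, lt_of_lt_of_le hmem.2 hx⟩
  rw [hc1, hc2, intervalIntegral_eq_integral (by linarith) hsupp2,
    intervalIntegral_eq_integral (by linarith) hsupp]
end Main3

noncomputable def NA (a : ℝ) (ρ : ℂ) (p : ℝ × ℝ) : ℂ :=
  cn ρ (π - 2*p.1 + 2*a) - cn ρ (π - 2*p.2)
noncomputable def NB (a : ℝ) (ρ : ℂ) (p : ℝ × ℝ) : ℂ :=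
  cn ρ (π - 2*p.1 + 2*p.2) - cn ρ (π - 2*a)

section Main4
variable {a : ℝ} {q : ℝ → ℂ} {ρ : ℂ}
variable (ha : 0 < a) (hπ : 3*a < π) (hρ : ρ ≠ 0)
  (hqP : IntegrableOn q (Set.Ioo a π)) (hq0 : ∀ x, x ∉ Set.Ioo a π → q x = 0)
  (hae : q =ᵐ[volume] qt a q)

lemma sn_sub (u v : ℝ) : sn ρ (u - v) = sn ρ u * cn ρ v - cn ρ u * sn ρ v := by
  unfold sn cn; push_cast; rw [mul_sub, Complex.sin_sub]

lemma cn_split (u v : ℝ) : cn ρ (u - v) = cn ρ u * cn ρ v + sn ρ u * sn ρ v := by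
  unfold sn cn; push_cast; rw [mul_sub, Complex.cos_sub]

lemma ker1 (t s : ℝ) : (sn ρ (π - t)/ρ) * (sn ρ (t - a - s)/ρ) * cn ρ (s - a)
    = (NA a ρ (t, s) + NB a ρ (t, s))/(4*ρ^2) := by
  have h := trig3a (ρ*((π - t : ℝ):ℂ)) (ρ*((t - a - s : ℝ):ℂ)) (ρ*((s - a : ℝ):ℂ))
  have e1 : ρ*((π-t:ℝ):ℂ) - ρ*((t-a-s:ℝ):ℂ) + ρ*((s-a:ℝ):ℂ) = ρ*((π-2*t+2*s:ℝ):ℂ) := by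
    push_cast; ring
  have e2 : ρ*((π-t:ℝ):ℂ) - ρ*((t-a-s:ℝ):ℂ) - ρ*((s-a:ℝ):ℂ) = ρ*((π-2*t+2*a:ℝ):ℂ) := by
    push_cast; ring
  have e3 : ρ*((π-t:ℝ):ℂ) + ρ*((t-a-s:ℝ):ℂ) + ρ*((s-a:ℝ):ℂ) = ρ*((π-2*a:ℝ):ℂ) := by
    push_cast; ring
  have e4 : ρ*((π-t:ℝ):ℂ) + ρ*((t-a-s:ℝ):ℂ) - ρ*((s-a:ℝ):ℂ) = ρ*((π-2*s:ℝ):ℂ) := by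
    push_cast; ring
  rw [e1, e2, e3, e4] at h
  simp only [NA, NB]
  unfold sn cn
  have l : Complex.sin (ρ*((π-t:ℝ):ℂ))/ρ * (Complex.sin (ρ*((t-a-s:ℝ):ℂ))/ρ)
      * Complex.cos (ρ*((s-a:ℝ):ℂ))
      = Complex.sin (ρ*((π-t:ℝ):ℂ)) * Complex.sin (ρ*((t-a-s:ℝ):ℂ))
        * Complex.cos (ρ*((s-a:ℝ):ℂ)) / (ρ*ρ) := by ring
  rw [l, h]; ring

lemma ker0 (t s : ℝ) : cn ρ (π - t) * (sn ρ (t - a - s)/ρ) * (sn ρ (s - a)/ρ)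
    = (NB a ρ (t, s) - NA a ρ (t, s))/(4*ρ^2) := by
  have h := trig3b (ρ*((π - t : ℝ):ℂ)) (ρ*((t - a - s : ℝ):ℂ)) (ρ*((s - a : ℝ):ℂ))
  have e1 : ρ*((π-t:ℝ):ℂ) - ρ*((t-a-s:ℝ):ℂ) + ρ*((s-a:ℝ):ℂ) = ρ*((π-2*t+2*s:ℝ):ℂ) := by
    push_cast; ring
  have e2 : ρ*((π-t:ℝ):ℂ) - ρ*((t-a-s:ℝ):ℂ) - ρ*((s-a:ℝ):ℂ) = ρ*((π-2*t+2*a:ℝ):ℂ) := by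
    push_cast; ring
  have e3 : ρ*((π-t:ℝ):ℂ) + ρ*((t-a-s:ℝ):ℂ) + ρ*((s-a:ℝ):ℂ) = ρ*((π-2*a:ℝ):ℂ) := by
    push_cast; ring
  have e4 : ρ*((π-t:ℝ):ℂ) + ρ*((t-a-s:ℝ):ℂ) - ρ*((s-a:ℝ):ℂ) = ρ*((π-2*s:ℝ):ℂ) := by
    push_cast; ring
  rw [e1, e2, e3, e4] at h
  simp only [NA, NB]
  unfold sn cn
  have l : Complex.cos (ρ*((π-t:ℝ):ℂ)) * (Complex.sin (ρ*((t-a-s:ℝ):ℂ))/ρ)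
      * (Complex.sin (ρ*((s-a:ℝ):ℂ))/ρ)
      = Complex.cos (ρ*((π-t:ℝ):ℂ)) * Complex.sin (ρ*((t-a-s:ℝ):ℂ))
        * Complex.sin (ρ*((s-a:ℝ):ℂ)) / (ρ*ρ) := by ring
  rw [l, h]; ring

lemma ker1a (t : ℝ) : (sn ρ (π - t)/ρ) * cn ρ (t - a)
    = sn ρ (π - a)/(2*ρ) + sn ρ (π - 2*t + a)/(2*ρ) := by
  have h := trig2a (ρ*((π - t : ℝ):ℂ)) (ρ*((t - a : ℝ):ℂ))
  have e1 : ρ*((π-t:ℝ):ℂ) + ρ*((t-a:ℝ):ℂ) = ρ*((π-a:ℝ):ℂ) := by push_cast; ring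
  have e2 : ρ*((π-t:ℝ):ℂ) - ρ*((t-a:ℝ):ℂ) = ρ*((π-2*t+a:ℝ):ℂ) := by push_cast; ring
  rw [e1, e2] at h
  unfold sn cn
  have l : Complex.sin (ρ*((π-t:ℝ):ℂ))/ρ * Complex.cos (ρ*((t-a:ℝ):ℂ))
      = Complex.sin (ρ*((π-t:ℝ):ℂ)) * Complex.cos (ρ*((t-a:ℝ):ℂ)) / ρ := by ring
  rw [l, h]; ring

lemma ker0a (t : ℝ) : cn ρ (π - t) * (sn ρ (t - a)/ρ)
    = sn ρ (π - a)/(2*ρ) - sn ρ (π - 2*t + a)/(2*ρ) := by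
  have h := trig2b (ρ*((π - t : ℝ):ℂ)) (ρ*((t - a : ℝ):ℂ))
  have e1 : ρ*((π-t:ℝ):ℂ) + ρ*((t-a:ℝ):ℂ) = ρ*((π-a:ℝ):ℂ) := by push_cast; ring
  have e2 : ρ*((π-t:ℝ):ℂ) - ρ*((t-a:ℝ):ℂ) = ρ*((π-2*t+a:ℝ):ℂ) := by push_cast; ring
  rw [e1, e2] at h
  unfold sn cn
  have l : Complex.cos (ρ*((π-t:ℝ):ℂ)) * (Complex.sin (ρ*((t-a:ℝ):ℂ))/ρ)
      = Complex.cos (ρ*((π-t:ℝ):ℂ)) * Complex.sin (ρ*((t-a:ℝ):ℂ)) / ρ := by ring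
  rw [l, h]; ring

include ha hπ hqP hq0 in
lemma intCY {H : ℝ → ℂ} (hH : Continuous H) (c d : ℝ) :
    IntervalIntegrable (fun t => H t * q t) volume c d :=
  (Gq_int ha hπ hqP hq0 hH).intervalIntegrable

lemma contY0 (ν : ℕ) : Continuous (fun t : ℝ => y0 ρ ν (t - a)) :=
  (y0cont ρ ν).comp (continuous_sub_right a)

include ha hπ hqP hq0 in
lemma y1_exp (ν : ℕ) (u : ℝ) : ySeq a q ρ ν 1 u
    = (sn ρ u/ρ) * (∫ t in a..u, (cn ρ t * y0 ρ ν (t - a)) * q t)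
      - (cn ρ u/ρ) * (∫ t in a..u, (sn ρ t * y0 ρ ν (t - a)) * q t) := by
  rw [ySeq_one]
  have key : ∀ t ∈ Set.uIcc a u, (sn ρ (u - t) / ρ) * q t * y0 ρ ν (t - a)
      = (sn ρ u/ρ) * ((cn ρ t * y0 ρ ν (t - a)) * q t)
        - (cn ρ u/ρ) * ((sn ρ t * y0 ρ ν (t - a)) * q t) := by
    intro t _
    rw [sn_sub]; ring
  rw [intervalIntegral.integral_congr key, intervalIntegral.integral_sub
      (((intCY ha hπ hqP hq0 (H := fun t => cn ρ t * y0 ρ ν (t - a)) ((cncont ρ).mul (contY0 ν)) a u).const_mul _))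
      (((intCY ha hπ hqP hq0 (H := fun t => sn ρ t * y0 ρ ν (t - a)) ((sncont ρ).mul (contY0 ν)) a u).const_mul _)),
    intervalIntegral.integral_const_mul, intervalIntegral.integral_const_mul]

include ha hπ hqP hq0 in
lemma y1_cont (ν : ℕ) : Continuous (fun u => ySeq a q ρ ν 1 u) := by
  have : (fun u => ySeq a q ρ ν 1 u)
      = fun u => (sn ρ u/ρ) * (∫ t in a..u, (cn ρ t * y0 ρ ν (t - a)) * q t)
        - (cn ρ u/ρ) * (∫ t in a..u, (sn ρ t * y0 ρ ν (t - a)) * q t) := by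
    funext u; exact y1_exp ha hπ hqP hq0 ν u
  rw [this]
  have hc1 := intervalIntegral.continuous_primitive
    (fun c d => intCY ha hπ hqP hq0 ((cncont ρ).mul (contY0 (a := a) (ρ := ρ) ν)) c d) a
  have hc2 := intervalIntegral.continuous_primitive
    (fun c d => intCY ha hπ hqP hq0 ((sncont ρ).mul (contY0 (a := a) (ρ := ρ) ν)) c d) a
  exact (((sncont ρ).div_const ρ).mul hc1).sub (((cncont ρ).div_const ρ).mul hc2)

include ha hπ hqP hq0 in
lemma contY1 (ν : ℕ) : Continuous (fun t : ℝ => ySeq a q ρ ν 1 (t - a)) :=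
  (y1_cont ha hπ hqP hq0 ν).comp (continuous_sub_right a)

include ha hπ hqP hq0 in
lemma y2_exp (ν : ℕ) (u : ℝ) : ySeq a q ρ ν 2 u
    = (sn ρ u/ρ) * (∫ t in a..u, (cn ρ t * ySeq a q ρ ν 1 (t - a)) * q t)
      - (cn ρ u/ρ) * (∫ t in a..u, (sn ρ t * ySeq a q ρ ν 1 (t - a)) * q t) := by
  rw [ySeq_two]
  have key : ∀ t ∈ Set.uIcc a u, (sn ρ (u - t) / ρ) * q t * ySeq a q ρ ν 1 (t - a)
      = (sn ρ u/ρ) * ((cn ρ t * ySeq a q ρ ν 1 (t - a)) * q t)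
        - (cn ρ u/ρ) * ((sn ρ t * ySeq a q ρ ν 1 (t - a)) * q t) := by
    intro t _
    rw [sn_sub]; ring
  rw [intervalIntegral.integral_congr key, intervalIntegral.integral_sub
      (((intCY ha hπ hqP hq0 (H := fun t => cn ρ t * ySeq a q ρ ν 1 (t - a)) ((cncont ρ).mul (contY1 ha hπ hqP hq0 ν)) a u).const_mul _))
      (((intCY ha hπ hqP hq0 (H := fun t => sn ρ t * ySeq a q ρ ν 1 (t - a)) ((sncont ρ).mul (contY1 ha hπ hqP hq0 ν)) a u).const_mul _)),
    intervalIntegral.integral_const_mul, intervalIntegral.integral_const_mul]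

include ha hπ hqP hq0 hae in
lemma y1_rep (ν : ℕ) (u : ℝ) : ySeq a q ρ ν 1 u
    = ∫ s, (Set.Iio u).indicator
        (fun s => (sn ρ (u - s)/ρ) * qt a q s * y0 ρ ν (s - a)) s := by
  rw [ySeq_one]
  have hcongr : ∫ t in a..u, (sn ρ (u - t) / ρ) * q t * y0 ρ ν (t - a)
      = ∫ t in a..u, (sn ρ (u - t) / ρ) * qt a q t * y0 ρ ν (t - a) := by
    apply intervalIntegral.integral_congr_ae
    filter_upwards [hae] with t ht
    intro _; rw [ht]
  rw [hcongr]
  exact intRight (b := 3*a) ha (by linarith) (fun s hs => by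
    rw [supp_qt a q s hs, mul_zero, zero_mul]) u
end Main4

def PP (a : ℝ) : Set (ℝ × ℝ) := {p | p.2 + a < p.1}

lemma PPm (a : ℝ) : MeasurableSet (PP a) :=
  measurableSet_lt (measurable_snd.add_const a) measurable_fst

noncomputable def DD (a : ℝ) (q : ℝ → ℂ) (F : ℝ × ℝ → ℂ) : ℂ :=
  ∫ p : ℝ × ℝ, (PP a).indicator F p * (qt a q p.1 * qt a q p.2) ∂(volume.prod volume)

noncomputable def FA (a : ℝ) (q : ℝ → ℂ) (ρ : ℂ) : ℝ × ℝ × ℝ → ℂ := fun z =>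
  ({w : ℝ × ℝ × ℝ | w.1 + a/2 < w.2.1 ∧ w.2.2 < w.1 - a/2}.indicator (fun _ => 1) z)
    * (xw a ρ z.1 * (qt a q z.2.1 * qt a q z.2.2))

noncomputable def FB (a : ℝ) (q : ℝ → ℂ) (ρ : ℂ) : ℝ × ℝ × ℝ → ℂ := fun z =>
  ({w : ℝ × ℝ × ℝ | w.2.1 < 7*a/2 - w.1 ∧ w.1 + w.2.1 - a/2 < w.2.2}.indicator (fun _ => 1) z)
    * (xw a ρ z.1 * (qt a q z.2.1 * qt a q z.2.2))

lemma FAm (a : ℝ) : MeasurableSet {w : ℝ × ℝ × ℝ | w.1 + a/2 < w.2.1 ∧ w.2.2 < w.1 - a/2} := by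
  apply MeasurableSet.inter
  · exact measurableSet_lt (measurable_fst.add_const _) (measurable_fst.comp measurable_snd)
  · exact measurableSet_lt (measurable_snd.comp measurable_snd)
      ((measurable_fst).sub_const _)

lemma FBm (a : ℝ) : MeasurableSet
    {w : ℝ × ℝ × ℝ | w.2.1 < 7*a/2 - w.1 ∧ w.1 + w.2.1 - a/2 < w.2.2} := by
  apply MeasurableSet.inter
  · exact measurableSet_lt (measurable_fst.comp measurable_snd)
      (measurable_const.sub measurable_fst)
  · exact measurableSet_lt ((measurable_fst.add (measurable_fst.comp measurable_snd)).sub_const _)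
      (measurable_snd.comp measurable_snd)

section Main5
variable {a : ℝ} {q : ℝ → ℂ} {ρ : ℂ}
variable (ha : 0 < a) (hπ : 3*a < π) (hρ : ρ ≠ 0)
  (hqP : IntegrableOn q (Set.Ioo a π)) (hq0 : ∀ x, x ∉ Set.Ioo a π → q x = 0)
  (hae : q =ᵐ[volume] qt a q)

include ha hπ hqP hq0 in
lemma DD_add {F G : ℝ × ℝ → ℂ} (hF : Continuous F) (hG : Continuous G) :
    DD a q (fun p => F p + G p) = DD a q F + DD a q G := by
  unfold DD
  rw [← MeasureTheory.integral_add (intKer2 (qt_int ha hπ hqP hq0) F hF _ (PPm a))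
    (intKer2 (qt_int ha hπ hqP hq0) G hG _ (PPm a))]
  congr 1; funext p
  by_cases hp : p ∈ PP a
  · rw [Set.indicator_of_mem hp, Set.indicator_of_mem hp, Set.indicator_of_mem hp]; ring
  · rw [Set.indicator_of_notMem hp, Set.indicator_of_notMem hp, Set.indicator_of_notMem hp]
    ring

lemma DD_smul (c : ℂ) (F : ℝ × ℝ → ℂ) : DD a q (fun p => c * F p) = c * DD a q F := by
  unfold DD
  rw [← MeasureTheory.integral_const_mul]
  congr 1; funext p
  by_cases hp : p ∈ PP a
  · rw [Set.indicator_of_mem hp, Set.indicator_of_mem hp]; ring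
  · rw [Set.indicator_of_notMem hp, Set.indicator_of_notMem hp]; ring

include ha hπ hρ hqP hq0 hae in
/-- reduction of the second-order term to the canonical double integral -/
lemma LemC (ν : ℕ) {κ : ℝ → ℂ} (hκ : Continuous κ) {X : ℝ} (hX : 3*a ≤ X) :
    ∫ t in a..X, (κ t * ySeq a q ρ ν 1 (t - a)) * q t
      = DD a q (fun p => κ p.1 * (sn ρ (p.1 - a - p.2)/ρ) * y0 ρ ν (p.2 - a)) := by
  have hqt := qt_int ha hπ hqP hq0
  set Kc : ℝ × ℝ → ℂ := fun p => κ p.1 * (sn ρ (p.1 - a - p.2)/ρ) * y0 ρ ν (p.2 - a) with hKc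
  have hKccont : Continuous Kc := by
    apply Continuous.mul
    apply Continuous.mul
    · exact hκ.comp continuous_fst
    · exact ((sncont ρ).comp (by continuity)).div_const ρ
    · exact (y0cont ρ ν).comp ((continuous_snd).sub continuous_const)
  have hFcInt : Integrable (Function.uncurry fun t s =>
      (PP a).indicator Kc (t, s) * (qt a q t * qt a q s)) (volume.prod volume) :=
    intKer2 hqt Kc hKccont _ (PPm a)
  -- truncate and switch to qt
  have step1 : ∫ t in a..X, (κ t * ySeq a q ρ ν 1 (t - a)) * q t
      = ∫ t, (κ t * ySeq a q ρ ν 1 (t - a)) * qt a q t := by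
    rw [tailG ha hπ hqP hq0 hae (G := fun t => κ t * ySeq a q ρ ν 1 (t - a)) (hκ.mul (contY1 ha hπ hqP hq0 ν)) hX]
    have hcg : ∫ t in a..(3*a), (κ t * ySeq a q ρ ν 1 (t - a)) * q t
        = ∫ t in a..(3*a), (κ t * ySeq a q ρ ν 1 (t - a)) * qt a q t := by
      apply intervalIntegral.integral_congr_ae
      filter_upwards [hae] with t ht _
      rw [ht]
    rw [hcg]
    exact intervalIntegral_eq_integral (by linarith)
      (fun t ht => by rw [supp_qt a q t ht, mul_zero])
  rw [step1]
  -- pointwise representation as an inner integral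
  have step2 : ∀ t : ℝ, (κ t * ySeq a q ρ ν 1 (t - a)) * qt a q t
      = ∫ s, (PP a).indicator Kc (t, s) * (qt a q t * qt a q s) := by
    intro t
    rw [y1_rep ha hπ hqP hq0 hae ν (t - a)]
    have e : (κ t * ∫ s, (Set.Iio (t - a)).indicator
          (fun s => (sn ρ (t - a - s)/ρ) * qt a q s * y0 ρ ν (s - a)) s) * qt a q t
        = ∫ s, (κ t * qt a q t) * ((Set.Iio (t - a)).indicator
          (fun s => (sn ρ (t - a - s)/ρ) * qt a q s * y0 ρ ν (s - a)) s) := by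
      rw [MeasureTheory.integral_const_mul]; ring
    rw [e]
    congr 1; funext s
    by_cases hs : (t, s) ∈ PP a
    · have hs' : s ∈ Set.Iio (t - a) := by
        simp only [PP, Set.mem_setOf_eq] at hs; simp only [Set.mem_Iio]; linarith
      rw [Set.indicator_of_mem hs', Set.indicator_of_mem hs]
      show (κ t * qt a q t) * ((sn ρ (t - a - s)/ρ) * qt a q s * y0 ρ ν (s - a))
        = (κ t * (sn ρ (t - a - s)/ρ) * y0 ρ ν (s - a)) * (qt a q t * qt a q s)
      ring
    · have hs' : s ∉ Set.Iio (t - a) := by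
        intro hcon
        have h2 := Set.mem_Iio.1 hcon
        exact hs (by simp only [PP, Set.mem_setOf_eq]; linarith)
      rw [Set.indicator_of_notMem hs', Set.indicator_of_notMem hs]
      ring
  calc ∫ t, (κ t * ySeq a q ρ ν 1 (t - a)) * qt a q t
      = ∫ t, ∫ s, (PP a).indicator Kc (t, s) * (qt a q t * qt a q s) := by
        congr 1; funext t; exact step2 t
    _ = ∫ z : ℝ × ℝ, (PP a).indicator Kc (z.1, z.2) * (qt a q z.1 * qt a q z.2)
          ∂(volume.prod volume) := MeasureTheory.integral_integral hFcInt
    _ = DD a q Kc := rfl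

include ha hπ hρ hqP hq0 hae in
lemma stepA (x : ℝ) :
    xw a ρ x * ((∫ t in (x + a/2)..(3*a), q t) * (∫ s in a..(x - a/2), q s))
      = ∫ p : ℝ × ℝ, FA a q ρ (x, p) ∂(volume.prod volume) := by
  have e1 : ∫ t in (x + a/2)..(3*a), q t = ∫ t, (Set.Ioi (x + a/2)).indicator (qt a q) t := by
    have : ∫ t in (x + a/2)..(3*a), q t = ∫ t in (x + a/2)..(3*a), qt a q t := by
      apply intervalIntegral.integral_congr_ae
      filter_upwards [hae] with t ht _; exact ht
    rw [this]
    exact intLeft (b := 3*a) ha (by linarith) (supp_qt a q) _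
  have e2 : ∫ s in a..(x - a/2), q s = ∫ s, (Set.Iio (x - a/2)).indicator (qt a q) s := by
    have : ∫ s in a..(x - a/2), q s = ∫ s in a..(x - a/2), qt a q s := by
      apply intervalIntegral.integral_congr_ae
      filter_upwards [hae] with t ht _; exact ht
    rw [this]
    exact intRight (b := 3*a) ha (by linarith) (supp_qt a q) _
  rw [e1, e2, ← MeasureTheory.integral_prod_mul, ← MeasureTheory.integral_const_mul]
  congr 1; funext p
  unfold FA
  by_cases h1 : x + a/2 < p.1
  · by_cases h2 : p.2 < x - a/2
    · rw [Set.indicator_of_mem (Set.mem_Ioi.2 h1), Set.indicator_of_mem (Set.mem_Iio.2 h2),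
        Set.indicator_of_mem (by exact ⟨h1, h2⟩ :
          (x, p) ∈ {w : ℝ × ℝ × ℝ | w.1 + a/2 < w.2.1 ∧ w.2.2 < w.1 - a/2})]
      ring
    · have hnm : (x, p) ∉ {w : ℝ × ℝ × ℝ | w.1 + a/2 < w.2.1 ∧ w.2.2 < w.1 - a/2} := by
        intro hc; rw [Set.mem_setOf_eq] at hc; exact h2 hc.2
      rw [Set.indicator_of_notMem (by simpa using h2 : p.2 ∉ Set.Iio (x - a/2)),
        Set.indicator_of_notMem hnm]
      ring
  · have hnm : (x, p) ∉ {w : ℝ × ℝ × ℝ | w.1 + a/2 < w.2.1 ∧ w.2.2 < w.1 - a/2} := by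
      intro hc; rw [Set.mem_setOf_eq] at hc; exact h1 hc.1
    rw [Set.indicator_of_notMem (by simpa using h1 : p.1 ∉ Set.Ioi (x + a/2)),
      Set.indicator_of_notMem hnm]
    ring

end Main5

section Main6
variable {a : ℝ} {q : ℝ → ℂ} {ρ : ℂ}
variable (ha : 0 < a) (hπ : 3*a < π) (hρ : ρ ≠ 0)
  (hqP : IntegrableOn q (Set.Ioo a π)) (hq0 : ∀ x, x ∉ Set.Ioo a π → q x = 0)
  (hae : q =ᵐ[volume] qt a q)

include ha hπ hρ hqP hq0 hae in
lemma stepB (x : ℝ) :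
    xw a ρ x * (∫ t in a..(7*a/2 - x), q t * (∫ τ in (x + t - a/2)..(3*a), q τ))
      = ∫ z : ℝ × ℝ, FB a q ρ (x, z) ∂(volume.prod volume) := by
  have hqt := qt_int ha hπ hqP hq0
  have hR : ∀ t : ℝ, ∫ τ in (x + t - a/2)..(3*a), q τ
      = ∫ τ, (Set.Ioi (x + t - a/2)).indicator (qt a q) τ := by
    intro t
    have : ∫ τ in (x + t - a/2)..(3*a), q τ = ∫ τ in (x + t - a/2)..(3*a), qt a q τ := by
      apply intervalIntegral.integral_congr_ae
      filter_upwards [hae] with τ hτ _; exact hτ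
    rw [this]
    exact intLeft (b := 3*a) ha (by linarith) (supp_qt a q) _
  have e0 : ∫ t in a..(7*a/2 - x), q t * (∫ τ in (x + t - a/2)..(3*a), q τ)
      = ∫ t in a..(7*a/2 - x), qt a q t * (∫ τ, (Set.Ioi (x + t - a/2)).indicator (qt a q) τ) := by
    apply intervalIntegral.integral_congr_ae
    filter_upwards [hae] with t ht _
    rw [ht, hR t]
  rw [e0, intRight (b := 3*a) ha (by linarith)
    (fun t ht => by rw [supp_qt a q t ht, zero_mul]) _,
    ← MeasureTheory.integral_const_mul]
  -- integrability of the inner slice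
  have hslice : Integrable (fun z : ℝ × ℝ => FB a q ρ (x, z)) (volume.prod volume) := by
    have heq : (fun z : ℝ × ℝ => FB a q ρ (x, z))
        = fun z => ({z : ℝ × ℝ | z.1 < 7*a/2 - x ∧ x + z.1 - a/2 < z.2}).indicator
            (fun _ => xw a ρ x) z * (qt a q z.1 * qt a q z.2) := by
      funext z
      unfold FB
      by_cases hz : z.1 < 7*a/2 - x ∧ x + z.1 - a/2 < z.2
      · rw [Set.indicator_of_mem (by exact hz :
            (x, z) ∈ {w : ℝ × ℝ × ℝ | w.2.1 < 7*a/2 - w.1 ∧ w.1 + w.2.1 - a/2 < w.2.2}),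
          Set.indicator_of_mem (by exact hz :
            z ∈ {z : ℝ × ℝ | z.1 < 7*a/2 - x ∧ x + z.1 - a/2 < z.2})]
        ring
      · rw [Set.indicator_of_notMem (by exact hz :
            (x, z) ∉ {w : ℝ × ℝ × ℝ | w.2.1 < 7*a/2 - w.1 ∧ w.1 + w.2.1 - a/2 < w.2.2}),
          Set.indicator_of_notMem (by exact hz :
            z ∉ {z : ℝ × ℝ | z.1 < 7*a/2 - x ∧ x + z.1 - a/2 < z.2})]
        ring
    rw [heq]
    refine intKer2 hqt _ continuous_const _ ?_
    apply MeasurableSet.inter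
    · exact measurableSet_lt measurable_fst measurable_const
    · exact measurableSet_lt ((measurable_const.add measurable_fst).sub measurable_const) measurable_snd
  have hiter : (∫ z : ℝ × ℝ, FB a q ρ (x, z) ∂(volume.prod volume))
      = ∫ t, ∫ τ, FB a q ρ (x, (t, τ)) :=
    (MeasureTheory.integral_integral (f := fun t τ => FB a q ρ (x, (t, τ))) hslice).symm
  rw [hiter]
  congr 1; funext t
  by_cases ht : t ∈ Set.Iio (7*a/2 - x)
  · rw [Set.indicator_of_mem ht]
    have e : xw a ρ x * (qt a q t * ∫ τ, (Set.Ioi (x + t - a/2)).indicator (qt a q) τ)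
        = ∫ τ, (xw a ρ x * qt a q t) * (Set.Ioi (x + t - a/2)).indicator (qt a q) τ := by
      rw [MeasureTheory.integral_const_mul]; ring
    rw [e]
    congr 1; funext τ
    unfold FB
    by_cases hτ : τ ∈ Set.Ioi (x + t - a/2)
    · rw [Set.indicator_of_mem hτ, Set.indicator_of_mem (by
        exact ⟨Set.mem_Iio.1 ht, Set.mem_Ioi.1 hτ⟩ :
          (x, (t, τ)) ∈ {w : ℝ × ℝ × ℝ | w.2.1 < 7*a/2 - w.1 ∧ w.1 + w.2.1 - a/2 < w.2.2})]
      ring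
    · have hnm : (x, (t, τ)) ∉ {w : ℝ × ℝ × ℝ | w.2.1 < 7*a/2 - w.1 ∧ w.1 + w.2.1 - a/2 < w.2.2} := by
        intro hc; rw [Set.mem_setOf_eq] at hc; exact hτ (Set.mem_Ioi.2 hc.2)
      rw [Set.indicator_of_notMem hτ, Set.indicator_of_notMem hnm]
      ring
  · rw [Set.indicator_of_notMem ht, mul_zero]
    symm
    have : ∀ τ : ℝ, FB a q ρ (x, (t, τ)) = 0 := by
      intro τ
      unfold FB
      have hnm : (x, (t, τ)) ∉ {w : ℝ × ℝ × ℝ | w.2.1 < 7*a/2 - w.1 ∧ w.1 + w.2.1 - a/2 < w.2.2} := by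
        intro hc; rw [Set.mem_setOf_eq] at hc; exact ht (Set.mem_Iio.2 hc.1)
      rw [Set.indicator_of_notMem hnm, zero_mul]
    simp only [this, MeasureTheory.integral_zero]

include ha hπ hρ hqP hq0 hae in
lemma LemA' : (∫ x, ∫ p : ℝ × ℝ, FA a q ρ (x, p) ∂(volume.prod volume))
    = (1/(2*ρ)) * DD a q (NA a ρ) := by
  have hqt := qt_int ha hπ hqP hq0
  have hFAInt : Integrable (Function.uncurry fun x p => FA a q ρ (x, p))
      (volume.prod (volume.prod volume)) := intKer3 hqt _ (FAm a)
  rw [MeasureTheory.integral_integral_swap hFAInt]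
  have key : ∀ p : ℝ × ℝ, (∫ x, FA a q ρ (x, p))
      = (1/(2*ρ)) * ((PP a).indicator (NA a ρ) p * (qt a q p.1 * qt a q p.2)) := by
    intro p
    by_cases hp1 : p.1 ∈ Set.Ioo a (3*a)
    · by_cases hp2 : p.2 ∈ Set.Ioo a (3*a)
      · have hfe : (fun x => FA a q ρ (x, p))
            = fun x => (Set.Ioo (p.2 + a/2) (p.1 - a/2)).indicator
                (fun x => sn ρ (π - 2*x + a)) x * (qt a q p.1 * qt a q p.2) := by
          funext x
          unfold FA
          by_cases hx : x ∈ Set.Ioo (p.2 + a/2) (p.1 - a/2)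
          · have hm : (x, p) ∈ {w : ℝ × ℝ × ℝ | w.1 + a/2 < w.2.1 ∧ w.2.2 < w.1 - a/2} := by
              rw [Set.mem_setOf_eq]
              constructor
              · have := hx.2; simp only [Set.mem_Ioo] at hx ⊢; linarith [hx.2]
              · have := hx.1; simp only [Set.mem_Ioo] at hx ⊢; linarith [hx.1]
            have hxw : x ∈ Set.Ioo (3*a/2) (5*a/2) := by
              simp only [Set.mem_Ioo] at hx hp1 hp2 ⊢
              constructor <;> [linarith [hx.1, hp2.1]; linarith [hx.2, hp1.2]]
            rw [Set.indicator_of_mem hm, Set.indicator_of_mem hx]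
            unfold xw
            rw [Set.indicator_of_mem hxw]
            ring
          · have hnm : (x, p) ∉ {w : ℝ × ℝ × ℝ | w.1 + a/2 < w.2.1 ∧ w.2.2 < w.1 - a/2} := by
              intro hc; rw [Set.mem_setOf_eq] at hc
              apply hx
              simp only [Set.mem_Ioo]
              constructor <;> [linarith [hc.2]; linarith [hc.1]]
            rw [Set.indicator_of_notMem hnm, Set.indicator_of_notMem hx]
            ring
        rw [hfe, MeasureTheory.integral_mul_const,
          MeasureTheory.integral_indicator measurableSet_Ioo]
        by_cases hP : p ∈ PP a
        · have hPle : p.2 + a/2 ≤ p.1 - a/2 := by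
            simp only [PP, Set.mem_setOf_eq] at hP; linarith
          rw [← MeasureTheory.integral_Ioc_eq_integral_Ioo,
            ← intervalIntegral.integral_of_le hPle, integral_sn a ρ hρ,
            Set.indicator_of_mem hP]
          have e1 : π - 2*(p.1 - a/2) + a = π - 2*p.1 + 2*a := by ring
          have e2 : π - 2*(p.2 + a/2) + a = π - 2*p.2 := by ring
          rw [e1, e2]
          unfold NA
          ring
        · have hPe : Set.Ioo (p.2 + a/2) (p.1 - a/2) = ∅ := by
            apply Set.Ioo_eq_empty
            intro hc
            exact hP (by simp only [PP, Set.mem_setOf_eq]; linarith)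
          rw [hPe, Set.indicator_of_notMem hP]
          simp
      · have hz : ∀ x : ℝ, FA a q ρ (x, p) = 0 := by
          intro x
          unfold FA
          rw [supp_qt a q p.2 hp2]
          ring
        simp only [hz, MeasureTheory.integral_zero, supp_qt a q p.2 hp2]
        ring
    · have hz : ∀ x : ℝ, FA a q ρ (x, p) = 0 := by
        intro x
        unfold FA
        rw [supp_qt a q p.1 hp1]
        ring
      simp only [hz, MeasureTheory.integral_zero, supp_qt a q p.1 hp1]
      ring
  calc (∫ p : ℝ × ℝ, ∫ x, FA a q ρ (x, p) ∂volume ∂(volume.prod volume))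
      = ∫ p : ℝ × ℝ, (1/(2*ρ)) * ((PP a).indicator (NA a ρ) p * (qt a q p.1 * qt a q p.2))
          ∂(volume.prod volume) := by congr 1; funext p; exact key p
    _ = (1/(2*ρ)) * DD a q (NA a ρ) := by rw [MeasureTheory.integral_const_mul]; rfl

include ha hπ hρ hqP hq0 hae in
lemma LemB' : (∫ x, ∫ z : ℝ × ℝ, FB a q ρ (x, z) ∂(volume.prod volume))
    = (1/(2*ρ)) * DD a q (NB a ρ) := by
  have hqt := qt_int ha hπ hqP hq0
  have hFBInt : Integrable (Function.uncurry fun x z => FB a q ρ (x, z))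
      (volume.prod (volume.prod volume)) := intKer3 hqt _ (FBm a)
  rw [MeasureTheory.integral_integral_swap hFBInt]
  have key : ∀ z : ℝ × ℝ, (∫ x, FB a q ρ (x, z))
      = (1/(2*ρ)) * ({w : ℝ × ℝ | w.1 + a < w.2}.indicator
          (fun w => cn ρ (π - 2*w.2 + 2*w.1) - cn ρ (π - 2*a)) z
            * (qt a q z.1 * qt a q z.2)) := by
    intro z
    by_cases hp1 : z.1 ∈ Set.Ioo a (3*a)
    · by_cases hp2 : z.2 ∈ Set.Ioo a (3*a)
      · have hfe : (fun x => FB a q ρ (x, z))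
            = fun x => (Set.Ioo (3*a/2) (z.2 - z.1 + a/2)).indicator
                (fun x => sn ρ (π - 2*x + a)) x * (qt a q z.1 * qt a q z.2) := by
          funext x
          unfold FB
          by_cases hx : x ∈ Set.Ioo (3*a/2) (z.2 - z.1 + a/2)
          · have hm : (x, z) ∈ {w : ℝ × ℝ × ℝ | w.2.1 < 7*a/2 - w.1 ∧ w.1 + w.2.1 - a/2 < w.2.2} := by
              rw [Set.mem_setOf_eq]
              simp only [Set.mem_Ioo] at hx hp1 hp2
              constructor
              · linarith [hx.2, hp2.2]
              · linarith [hx.2]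
            have hxw : x ∈ Set.Ioo (3*a/2) (5*a/2) := by
              simp only [Set.mem_Ioo] at hx hp1 hp2 ⊢
              exact ⟨hx.1, by linarith [hx.2, hp1.1, hp2.2]⟩
            rw [Set.indicator_of_mem hm, Set.indicator_of_mem hx]
            unfold xw
            rw [Set.indicator_of_mem hxw]
            ring
          · by_cases hxw : x ∈ Set.Ioo (3*a/2) (5*a/2)
            · have hnm : (x, z) ∉ {w : ℝ × ℝ × ℝ | w.2.1 < 7*a/2 - w.1 ∧ w.1 + w.2.1 - a/2 < w.2.2} := by
                intro hc; rw [Set.mem_setOf_eq] at hc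
                apply hx
                simp only [Set.mem_Ioo] at hxw ⊢
                exact ⟨hxw.1, by linarith [hc.2]⟩
              rw [Set.indicator_of_notMem hnm, Set.indicator_of_notMem hx]
              ring
            · have hxw0 : xw a ρ x = 0 := Set.indicator_of_notMem hxw _
              rw [Set.indicator_of_notMem hx, hxw0]
              ring
        rw [hfe, MeasureTheory.integral_mul_const,
          MeasureTheory.integral_indicator measurableSet_Ioo]
        by_cases hP : z ∈ {w : ℝ × ℝ | w.1 + a < w.2}
        · have hPle : 3*a/2 ≤ z.2 - z.1 + a/2 := by
            rw [Set.mem_setOf_eq] at hP; linarith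
          rw [← MeasureTheory.integral_Ioc_eq_integral_Ioo,
            ← intervalIntegral.integral_of_le hPle, integral_sn a ρ hρ,
            Set.indicator_of_mem hP]
          have e1 : π - 2*(z.2 - z.1 + a/2) + a = π - 2*z.2 + 2*z.1 := by ring
          have e2 : π - 2*(3*a/2) + a = π - 2*a := by ring
          rw [e1, e2]
          ring
        · have hPe : Set.Ioo (3*a/2) (z.2 - z.1 + a/2) = ∅ := by
            apply Set.Ioo_eq_empty
            intro hc
            exact hP (by rw [Set.mem_setOf_eq]; linarith)
          rw [hPe, Set.indicator_of_notMem hP]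
          simp
      · have hz : ∀ x : ℝ, FB a q ρ (x, z) = 0 := by
          intro x
          unfold FB
          rw [supp_qt a q z.2 hp2]
          ring
        simp only [hz, MeasureTheory.integral_zero, supp_qt a q z.2 hp2]
        ring
    · have hz : ∀ x : ℝ, FB a q ρ (x, z) = 0 := by
        intro x
        unfold FB
        rw [supp_qt a q z.1 hp1]
        ring
      simp only [hz, MeasureTheory.integral_zero, supp_qt a q z.1 hp1]
      ring
  calc (∫ y : ℝ × ℝ, ∫ x, FB a q ρ (x, y) ∂volume ∂(volume.prod volume))
      = ∫ y : ℝ × ℝ, (1/(2*ρ)) * ({w : ℝ × ℝ | w.1 + a < w.2}.indicator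
          (fun w => cn ρ (π - 2*w.2 + 2*w.1) - cn ρ (π - 2*a)) y
            * (qt a q y.1 * qt a q y.2)) ∂(volume.prod volume) := by
        congr 1; funext y; exact key y
    _ = (1/(2*ρ)) * ∫ y : ℝ × ℝ, ({w : ℝ × ℝ | w.1 + a < w.2}.indicator
          (fun w => cn ρ (π - 2*w.2 + 2*w.1) - cn ρ (π - 2*a)) y
            * (qt a q y.1 * qt a q y.2)) ∂(volume.prod volume) :=
        MeasureTheory.integral_const_mul _ _
    _ = (1/(2*ρ)) * DD a q (NB a ρ) := by
        congr 1
        rw [show DD a q (NB a ρ) = ∫ z : ℝ × ℝ,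
            (fun p : ℝ × ℝ => (PP a).indicator (NB a ρ) p * (qt a q p.1 * qt a q p.2)) z.swap
              ∂(volume.prod volume) from
          (MeasureTheory.integral_prod_swap
            (f := fun p : ℝ × ℝ => (PP a).indicator (NB a ρ) p
              * (qt a q p.1 * qt a q p.2))).symm]
        congr 1; funext y
        have hswap : (fun p : ℝ × ℝ => (PP a).indicator (NB a ρ) p
              * (qt a q p.1 * qt a q p.2)) y.swap
            = (PP a).indicator (NB a ρ) (y.2, y.1) * (qt a q y.2 * qt a q y.1) := rfl
        rw [hswap]
        by_cases hy : y ∈ {w : ℝ × ℝ | w.1 + a < w.2}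
        · rw [Set.indicator_of_mem hy,
            Set.indicator_of_mem (show (y.2, y.1) ∈ PP a from hy)]
          show (cn ρ (π - 2*y.2 + 2*y.1) - cn ρ (π - 2*a)) * (qt a q y.1 * qt a q y.2)
            = (cn ρ (π - 2*y.2 + 2*y.1) - cn ρ (π - 2*a)) * (qt a q y.2 * qt a q y.1)
          ring
        · rw [Set.indicator_of_notMem hy,
            Set.indicator_of_notMem (show (y.2, y.1) ∉ PP a from hy)]
          ring
end Main6

section Main7
variable {a : ℝ} {q : ℝ → ℂ} {ρ : ℂ}
variable (ha : 0 < a) (hπ : 3*a < π) (hρ : ρ ≠ 0)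
  (hqP : IntegrableOn q (Set.Ioo a π)) (hq0 : ∀ x, x ∉ Set.Ioo a π → q x = 0)
  (hae : q =ᵐ[volume] qt a q)

include ha hπ hqP hq0 in
lemma DD_sub {F G : ℝ × ℝ → ℂ} (hF : Continuous F) (hG : Continuous G) :
    DD a q (fun p => F p - G p) = DD a q F - DD a q G := by
  unfold DD
  rw [← MeasureTheory.integral_sub (intKer2 (qt_int ha hπ hqP hq0) F hF _ (PPm a))
    (intKer2 (qt_int ha hπ hqP hq0) G hG _ (PPm a))]
  congr 1; funext p
  by_cases hp : p ∈ PP a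
  · rw [Set.indicator_of_mem hp, Set.indicator_of_mem hp, Set.indicator_of_mem hp]; ring
  · rw [Set.indicator_of_notMem hp, Set.indicator_of_notMem hp, Set.indicator_of_notMem hp]
    ring

lemma contNA : Continuous (NA a ρ) := by
  unfold NA
  exact ((cncont ρ).comp (by continuity)).sub ((cncont ρ).comp (by continuity))

lemma contNB : Continuous (NB a ρ) := by
  unfold NB
  exact ((cncont ρ).comp (by continuity)).sub ((cncont ρ).comp (by continuity))

include ha hπ hρ hqP hq0 hae in
/-- splitting of the w-integral -/
lemma RQsplit (ν : ℕ) : (∫ x in a..(3*a), wfun a q ν x * sn ρ (π - 2*x + a))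
    = (∫ x in a..(3*a), q x * sn ρ (π - 2*x + a))
      + ((1/(2*ρ)) * DD a q (NA a ρ) - (-1:ℂ)^ν * ((1/(2*ρ)) * DD a q (NB a ρ))) := by
  have hqt := qt_int ha hπ hqP hq0
  have hFAInt : Integrable (Function.uncurry fun x p => FA a q ρ (x, p))
      (volume.prod (volume.prod volume)) := intKer3 hqt _ (FAm a)
  have hFBInt : Integrable (Function.uncurry fun x z => FB a q ρ (x, z))
      (volume.prod (volume.prod volume)) := intKer3 hqt _ (FBm a)
  have hIA : Integrable (fun x => ∫ p : ℝ × ℝ, FA a q ρ (x, p) ∂(volume.prod volume)) :=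
    hFAInt.integral_prod_left
  have hIB : Integrable (fun x => ∫ z : ℝ × ℝ, FB a q ρ (x, z) ∂(volume.prod volume)) :=
    hFBInt.integral_prod_left
  have hxw_sub : ∀ x : ℝ, x ∉ Set.Ioo a (3*a) → xw a ρ x = 0 := by
    intro x hx
    apply Set.indicator_of_notMem
    intro hmem
    simp only [Set.mem_Ioo] at hmem hx
    exact hx (by constructor <;> [linarith [hmem.1]; linarith [hmem.2]])
  have hptw : ∀ x : ℝ, wfun a q ν x * sn ρ (π - 2*x + a)
      = q x * sn ρ (π - 2*x + a)
        + ((∫ p : ℝ × ℝ, FA a q ρ (x, p) ∂(volume.prod volume))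
          - (-1:ℂ)^ν * (∫ z : ℝ × ℝ, FB a q ρ (x, z) ∂(volume.prod volume))) := by
    intro x
    unfold wfun
    rw [← stepA ha hπ hρ hqP hq0 hae x, ← stepB ha hπ hρ hqP hq0 hae x]
    by_cases hx : x ∈ Set.Ioo (3*a/2) (5*a/2)
    · rw [if_pos hx]
      unfold Qfun
      have hxw : xw a ρ x = sn ρ (π - 2*x + a) := Set.indicator_of_mem hx _
      rw [hxw]
      ring
    · rw [if_neg hx]
      have hxw : xw a ρ x = 0 := Set.indicator_of_notMem hx _
      rw [hxw]
      ring
  have hsn_int : IntervalIntegrable (fun x => q x * sn ρ (π - 2*x + a)) volume a (3*a) := by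
    have h1 : Integrable (fun x => (sn ρ (π - 2*x + a)) * q x) :=
      Gq_int ha hπ hqP hq0 ((sncont ρ).comp (by continuity))
    exact (h1.congr (Filter.Eventually.of_forall fun x => by ring)).intervalIntegrable
  have hdiff_int : IntervalIntegrable (fun x =>
      (∫ p : ℝ × ℝ, FA a q ρ (x, p) ∂(volume.prod volume))
        - (-1:ℂ)^ν * (∫ z : ℝ × ℝ, FB a q ρ (x, z) ∂(volume.prod volume))) volume a (3*a) :=
    (hIA.sub (hIB.const_mul _)).intervalIntegrable
  rw [intervalIntegral.integral_congr (fun x _ => hptw x),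
    intervalIntegral.integral_add hsn_int hdiff_int]
  congr 1
  have hsupp : ∀ x : ℝ, x ∉ Set.Ioo a (3*a) →
      (∫ p : ℝ × ℝ, FA a q ρ (x, p) ∂(volume.prod volume))
        - (-1:ℂ)^ν * (∫ z : ℝ × ℝ, FB a q ρ (x, z) ∂(volume.prod volume)) = 0 := by
    intro x hx
    rw [← stepA ha hπ hρ hqP hq0 hae x, ← stepB ha hπ hρ hqP hq0 hae x, hxw_sub x hx]
    ring
  rw [intervalIntegral_eq_integral (by linarith) hsupp,
    MeasureTheory.integral_sub hIA (hIB.const_mul _), MeasureTheory.integral_const_mul,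
    LemA' ha hπ hρ hqP hq0 hae, LemB' ha hπ hρ hqP hq0 hae]

include ha hπ hρ hqP hq0 hae in
/-- the first-order term, value case -/
lemma T1val : (∫ t in a..π, (sn ρ (π - t)/ρ) * q t * y0 ρ 0 (t - a))
    = (∫ t in a..π, q t) * sn ρ (π - a)/(2*ρ)
      + (1/(2*ρ)) * ∫ x in a..(3*a), q x * sn ρ (π - 2*x + a) := by
  have key : ∀ t ∈ Set.uIcc a π, (sn ρ (π - t)/ρ) * q t * y0 ρ 0 (t - a)
      = (sn ρ (π - a)/(2*ρ)) * q t + (sn ρ (π - 2*t + a)/(2*ρ)) * q t := by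
    intro t _
    have h0 : y0 ρ 0 (t - a) = cn ρ (t - a) := by unfold y0 cn; simp
    rw [h0]
    have hk := ker1a (a := a) (ρ := ρ) t
    calc (sn ρ (π - t)/ρ) * q t * cn ρ (t - a)
        = ((sn ρ (π - t)/ρ) * cn ρ (t - a)) * q t := by ring
      _ = (sn ρ (π - a)/(2*ρ) + sn ρ (π - 2*t + a)/(2*ρ)) * q t := by rw [hk]
      _ = (sn ρ (π - a)/(2*ρ)) * q t + (sn ρ (π - 2*t + a)/(2*ρ)) * q t := by ring
  have hi1 : IntervalIntegrable (fun t => (sn ρ (π - a)/(2*ρ)) * q t) volume a π :=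
    intCY ha hπ hqP hq0 continuous_const a π
  have hi2 : IntervalIntegrable (fun t => (sn ρ (π - 2*t + a)/(2*ρ)) * q t) volume a π :=
    intCY ha hπ hqP hq0 (Continuous.div_const ((sncont ρ).comp (by continuity)) (2*ρ)) a π
  rw [intervalIntegral.integral_congr key, intervalIntegral.integral_add hi1 hi2]
  congr 1
  · rw [intervalIntegral.integral_const_mul]; ring
  · have htr : ∫ t in a..π, (sn ρ (π - 2*t + a)/(2*ρ)) * q t
        = ∫ t in a..(3*a), (sn ρ (π - 2*t + a)/(2*ρ)) * q t :=
      tailG ha hπ hqP hq0 hae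
        (Continuous.div_const ((sncont ρ).comp (by continuity)) (2*ρ)) hπ.le
    rw [htr, ← intervalIntegral.integral_const_mul]
    apply intervalIntegral.integral_congr
    intro x _; ring
end Main7

section Main8
variable {a : ℝ} {q : ℝ → ℂ} {ρ : ℂ}
variable (ha : 0 < a) (hπ : 3*a < π) (hρ : ρ ≠ 0)
  (hqP : IntegrableOn q (Set.Ioo a π)) (hq0 : ∀ x, x ∉ Set.Ioo a π → q x = 0)
  (hae : q =ᵐ[volume] qt a q)

include hρ in
lemma hasDeriv_sn (z : ℝ) : HasDerivAt (fun x : ℝ => sn ρ x/ρ) (cn ρ z) z := by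
  have h1 : HasDerivAt (fun w : ℂ => ρ * w) ρ (z : ℂ) := by
    simpa using (hasDerivAt_id (z:ℂ)).const_mul ρ
  have h2 := (h1.csin).div_const ρ
  have h3 := h2.comp_ofReal
  convert h3 using 1
  · rfl
  · unfold cn
    field_simp

lemma hasDeriv_cn (z : ℝ) : HasDerivAt (fun x : ℝ => cn ρ x/ρ) (-(sn ρ z)) z := by
  have h1 : HasDerivAt (fun w : ℂ => ρ * w) ρ (z : ℂ) := by
    simpa using (hasDerivAt_id (z:ℂ)).const_mul ρ
  have h2 := (h1.ccos).div_const ρ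
  have h3 := h2.comp_ofReal
  by_cases hρ0 : ρ = 0
  · subst hρ0
    unfold sn
    simp only [zero_mul, Complex.sin_zero, neg_zero]
    have : (fun x : ℝ => cn 0 x / 0) = fun _ => (0:ℂ) := by
      funext x; simp
    rw [this]
    exact hasDerivAt_const z 0
  · convert h3 using 1
    · rfl
    · unfold sn
      field_simp

include ha hπ hρ hqP hq0 hae in
lemma Y1near {x : ℝ} (hx : 3*a < x) : Yfun a q ρ 1 x
    = (sn ρ x/ρ) * (1 + (∫ t in a..(3*a), (cn ρ t * y0 ρ 1 (t - a)) * q t)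
        + (∫ t in a..(3*a), (cn ρ t * ySeq a q ρ 1 1 (t - a)) * q t))
      - (cn ρ x/ρ) * ((∫ t in a..(3*a), (sn ρ t * y0 ρ 1 (t - a)) * q t)
        + (∫ t in a..(3*a), (sn ρ t * ySeq a q ρ 1 1 (t - a)) * q t)) := by
  have h0 : ySeq a q ρ 1 0 x = sn ρ x/ρ := by
    show y0 ρ 1 x = sn ρ x/ρ
    unfold y0 sn
    norm_num
  have h1 := y1_exp ha hπ hqP hq0 (ρ := ρ) 1 x
  have h2 := y2_exp ha hπ hqP hq0 (ρ := ρ) 1 x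
  rw [tailG ha hπ hqP hq0 hae (G := fun t => cn ρ t * y0 ρ 1 (t - a)) ((cncont ρ).mul (contY0 (a := a) (ρ := ρ) 1)) hx.le,
    tailG ha hπ hqP hq0 hae (G := fun t => sn ρ t * y0 ρ 1 (t - a)) ((sncont ρ).mul (contY0 (a := a) (ρ := ρ) 1)) hx.le] at h1
  rw [tailG ha hπ hqP hq0 hae (G := fun t => cn ρ t * ySeq a q ρ 1 1 (t - a)) ((cncont ρ).mul (contY1 ha hπ hqP hq0 1)) hx.le,
    tailG ha hπ hqP hq0 hae (G := fun t => sn ρ t * ySeq a q ρ 1 1 (t - a)) ((sncont ρ).mul (contY1 ha hπ hqP hq0 1)) hx.le] at h2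
  show ySeq a q ρ 1 0 x + ySeq a q ρ 1 1 x + ySeq a q ρ 1 2 x = _
  rw [h0, h1, h2]
  ring

include ha hπ hρ hqP hq0 hae in
lemma derivYval : deriv (fun x => Yfun a q ρ 1 x) π
    = cn ρ π * (1 + (∫ t in a..(3*a), (cn ρ t * y0 ρ 1 (t - a)) * q t)
        + (∫ t in a..(3*a), (cn ρ t * ySeq a q ρ 1 1 (t - a)) * q t))
      + sn ρ π * ((∫ t in a..(3*a), (sn ρ t * y0 ρ 1 (t - a)) * q t)
        + (∫ t in a..(3*a), (sn ρ t * ySeq a q ρ 1 1 (t - a)) * q t)) := by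
  set c1 : ℂ := 1 + (∫ t in a..(3*a), (cn ρ t * y0 ρ 1 (t - a)) * q t)
      + (∫ t in a..(3*a), (cn ρ t * ySeq a q ρ 1 1 (t - a)) * q t) with hc1
  set c2 : ℂ := (∫ t in a..(3*a), (sn ρ t * y0 ρ 1 (t - a)) * q t)
      + (∫ t in a..(3*a), (sn ρ t * ySeq a q ρ 1 1 (t - a)) * q t) with hc2
  have hev : (fun x => Yfun a q ρ 1 x) =ᶠ[nhds π]
      (fun x => (sn ρ x/ρ) * c1 - (cn ρ x/ρ) * c2) := by
    filter_upwards [Ioi_mem_nhds hπ] with x hx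
    exact Y1near ha hπ hρ hqP hq0 hae hx
  rw [Filter.EventuallyEq.deriv_eq hev]
  have hd := ((hasDeriv_sn hρ π).mul_const c1).sub ((hasDeriv_cn (ρ := ρ) π).mul_const c2)
  rw [show (fun x => sn ρ x/ρ * c1 - cn ρ x/ρ * c2) = ((fun y => sn ρ y/ρ * c1) - fun y => cn ρ y/ρ * c2) from rfl, hd.deriv]
  ring

include ha hπ hρ hqP hq0 hae in
lemma comb1 : cn ρ π * (∫ t in a..(3*a), (cn ρ t * y0 ρ 1 (t - a)) * q t)
    + sn ρ π * (∫ t in a..(3*a), (sn ρ t * y0 ρ 1 (t - a)) * q t)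
    = (∫ t in a..π, q t) * sn ρ (π - a)/(2*ρ)
      - (1/(2*ρ)) * ∫ x in a..(3*a), q x * sn ρ (π - 2*x + a) := by
  have hiA : IntervalIntegrable (fun t => cn ρ π * ((cn ρ t * y0 ρ 1 (t - a)) * q t))
      volume a (3*a) :=
    (intCY ha hπ hqP hq0 ((cncont ρ).mul (contY0 (a := a) (ρ := ρ) 1)) a (3*a)).const_mul _
  have hiB : IntervalIntegrable (fun t => sn ρ π * ((sn ρ t * y0 ρ 1 (t - a)) * q t))
      volume a (3*a) :=
    (intCY ha hπ hqP hq0 ((sncont ρ).mul (contY0 (a := a) (ρ := ρ) 1)) a (3*a)).const_mul _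
  have e1 : cn ρ π * (∫ t in a..(3*a), (cn ρ t * y0 ρ 1 (t - a)) * q t)
      + sn ρ π * (∫ t in a..(3*a), (sn ρ t * y0 ρ 1 (t - a)) * q t)
      = ∫ t in a..(3*a),
          (cn ρ π * ((cn ρ t * y0 ρ 1 (t - a)) * q t)
            + sn ρ π * ((sn ρ t * y0 ρ 1 (t - a)) * q t)) := by
    rw [intervalIntegral.integral_add hiA hiB, intervalIntegral.integral_const_mul,
      intervalIntegral.integral_const_mul]
  rw [e1]
  have key : ∀ t ∈ Set.uIcc a (3*a),
      (cn ρ π * ((cn ρ t * y0 ρ 1 (t - a)) * q t)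
        + sn ρ π * ((sn ρ t * y0 ρ 1 (t - a)) * q t))
      = (sn ρ (π - a)/(2*ρ)) * q t - (sn ρ (π - 2*t + a)/(2*ρ)) * q t := by
    intro t _
    have h0 : y0 ρ 1 (t - a) = sn ρ (t - a)/ρ := by unfold y0 sn; norm_num
    have hsplit := cn_split (ρ := ρ) π t
    have hk := ker0a (a := a) (ρ := ρ) t
    calc cn ρ π * ((cn ρ t * y0 ρ 1 (t - a)) * q t)
          + sn ρ π * ((sn ρ t * y0 ρ 1 (t - a)) * q t)
        = (cn ρ π * cn ρ t + sn ρ π * sn ρ t) * (y0 ρ 1 (t - a) * q t) := by ring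
      _ = cn ρ (π - t) * (y0 ρ 1 (t - a) * q t) := by rw [hsplit]
      _ = (cn ρ (π - t) * (sn ρ (t - a)/ρ)) * q t := by rw [h0]; ring
      _ = (sn ρ (π - a)/(2*ρ) - sn ρ (π - 2*t + a)/(2*ρ)) * q t := by rw [hk]
      _ = (sn ρ (π - a)/(2*ρ)) * q t - (sn ρ (π - 2*t + a)/(2*ρ)) * q t := by ring
  have hi1 : IntervalIntegrable (fun t => (sn ρ (π - a)/(2*ρ)) * q t) volume a (3*a) :=
    intCY ha hπ hqP hq0 continuous_const a (3*a)
  have hi2 : IntervalIntegrable (fun t => (sn ρ (π - 2*t + a)/(2*ρ)) * q t) volume a (3*a) :=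
    intCY ha hπ hqP hq0
      (Continuous.div_const ((sncont ρ).comp (by continuity)) (2*ρ)) a (3*a)
  rw [intervalIntegral.integral_congr key, intervalIntegral.integral_sub hi1 hi2]
  congr 1
  · rw [intervalIntegral.integral_const_mul]
    have : ∫ t in a..π, (1:ℂ) * q t = ∫ t in a..(3*a), (1:ℂ) * q t :=
      tailG ha hπ hqP hq0 hae continuous_const hπ.le
    simp only [one_mul] at this
    rw [← this]
    ring
  · rw [← intervalIntegral.integral_const_mul]
    apply intervalIntegral.integral_congr
    intro x _; ring

end Main8

section Main9
variable {a : ℝ} {q : ℝ → ℂ} {ρ : ℂ}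
variable (ha : 0 < a) (hπ : 3*a < π) (hρ : ρ ≠ 0)
  (hqP : IntegrableOn q (Set.Ioo a π)) (hq0 : ∀ x, x ∉ Set.Ioo a π → q x = 0)
  (hae : q =ᵐ[volume] qt a q)

lemma ker0' (p : ℝ × ℝ) : cn ρ (π - p.1) * (sn ρ (p.1 - a - p.2)/ρ) * (sn ρ (p.2 - a)/ρ)
    = (NB a ρ p - NA a ρ p)/(4*ρ^2) := ker0 p.1 p.2

lemma ker1' (p : ℝ × ℝ) : (sn ρ (π - p.1)/ρ) * (sn ρ (p.1 - a - p.2)/ρ) * cn ρ (p.2 - a)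
    = (NA a ρ p + NB a ρ p)/(4*ρ^2) := ker1 p.1 p.2

include ha hπ hρ hqP hq0 hae in
lemma comb2 : cn ρ π * (∫ t in a..(3*a), (cn ρ t * ySeq a q ρ 1 1 (t - a)) * q t)
    + sn ρ π * (∫ t in a..(3*a), (sn ρ t * ySeq a q ρ 1 1 (t - a)) * q t)
    = (1/(4*ρ^2)) * (DD a q (NB a ρ) - DD a q (NA a ρ)) := by
  have hiA : IntervalIntegrable (fun t => cn ρ π * ((cn ρ t * ySeq a q ρ 1 1 (t - a)) * q t))
      volume a (3*a) :=
    (intCY ha hπ hqP hq0 ((cncont ρ).mul (contY1 ha hπ hqP hq0 1)) a (3*a)).const_mul _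
  have hiB : IntervalIntegrable (fun t => sn ρ π * ((sn ρ t * ySeq a q ρ 1 1 (t - a)) * q t))
      volume a (3*a) :=
    (intCY ha hπ hqP hq0 ((sncont ρ).mul (contY1 ha hπ hqP hq0 1)) a (3*a)).const_mul _
  have e1 : cn ρ π * (∫ t in a..(3*a), (cn ρ t * ySeq a q ρ 1 1 (t - a)) * q t)
      + sn ρ π * (∫ t in a..(3*a), (sn ρ t * ySeq a q ρ 1 1 (t - a)) * q t)
      = ∫ t in a..(3*a),
          (cn ρ π * ((cn ρ t * ySeq a q ρ 1 1 (t - a)) * q t)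
            + sn ρ π * ((sn ρ t * ySeq a q ρ 1 1 (t - a)) * q t)) := by
    rw [intervalIntegral.integral_add hiA hiB, intervalIntegral.integral_const_mul,
      intervalIntegral.integral_const_mul]
  rw [e1]
  have key : ∀ t ∈ Set.uIcc a (3*a),
      (cn ρ π * ((cn ρ t * ySeq a q ρ 1 1 (t - a)) * q t)
        + sn ρ π * ((sn ρ t * ySeq a q ρ 1 1 (t - a)) * q t))
      = ((fun t => cn ρ (π - t)) t * ySeq a q ρ 1 1 (t - a)) * q t := by
    intro t _
    have hsplit := cn_split (ρ := ρ) π t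
    calc cn ρ π * ((cn ρ t * ySeq a q ρ 1 1 (t - a)) * q t)
          + sn ρ π * ((sn ρ t * ySeq a q ρ 1 1 (t - a)) * q t)
        = (cn ρ π * cn ρ t + sn ρ π * sn ρ t) * (ySeq a q ρ 1 1 (t - a) * q t) := by ring
      _ = cn ρ (π - t) * (ySeq a q ρ 1 1 (t - a) * q t) := by rw [hsplit]
      _ = ((fun t => cn ρ (π - t)) t * ySeq a q ρ 1 1 (t - a)) * q t := by ring
  rw [intervalIntegral.integral_congr key,
    LemC ha hπ hρ hqP hq0 hae 1 (κ := fun t => cn ρ (π - t))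
      ((cncont ρ).comp (by continuity)) le_rfl]
  have hker : (fun p : ℝ × ℝ => (fun t => cn ρ (π - t)) p.1 * (sn ρ (p.1 - a - p.2)/ρ)
        * y0 ρ 1 (p.2 - a))
      = fun p => (1/(4*ρ^2)) * (NB a ρ p - NA a ρ p) := by
    funext p
    have h0 : y0 ρ 1 (p.2 - a) = sn ρ (p.2 - a)/ρ := by unfold y0 sn; norm_num
    rw [h0]
    rw [ker0' p]
    ring
  rw [hker, DD_smul, DD_sub ha hπ hqP hq0 contNB contNA]

include ha hπ hρ hqP hq0 hae in
lemma T2val : ySeq a q ρ 0 2 π = (1/(4*ρ^2)) * (DD a q (NA a ρ) + DD a q (NB a ρ)) := by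
  rw [ySeq_two]
  have key : ∀ t ∈ Set.uIcc a π, (sn ρ (π - t) / ρ) * q t * ySeq a q ρ 0 1 (t - a)
      = ((fun t => sn ρ (π - t)/ρ) t * ySeq a q ρ 0 1 (t - a)) * q t := by
    intro t _; ring
  rw [intervalIntegral.integral_congr key,
    LemC ha hπ hρ hqP hq0 hae 0 (κ := fun t => sn ρ (π - t)/ρ)
      (((sncont ρ).comp (by continuity)).div_const ρ) hπ.le]
  have hker : (fun p : ℝ × ℝ => (fun t => sn ρ (π - t)/ρ) p.1 * (sn ρ (p.1 - a - p.2)/ρ)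
        * y0 ρ 0 (p.2 - a))
      = fun p => (1/(4*ρ^2)) * (NA a ρ p + NB a ρ p) := by
    funext p
    have h0 : y0 ρ 0 (p.2 - a) = cn ρ (p.2 - a) := by unfold y0 cn; norm_num
    rw [h0]
    rw [ker1' p]
    ring
  rw [hker, DD_smul]
  have : DD a q (fun p => NA a ρ p + NB a ρ p) = DD a q (NA a ρ) + DD a q (NB a ρ) :=
    DD_add ha hπ hqP hq0 contNA contNB
  rw [this]

end Main9

theorem statement11
    (a : ℝ) (ha : a ∈ Set.Ioo 0 (π / 3))
    (q : ℝ → ℂ)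
    (hq2 : MemLp q 2 (volume.restrict (Set.Ioo 0 π)))
    (hq0 : ∀ x : ℝ, x ∉ Set.Ioo a π → q x = 0)
    (hq3 : ∀ᵐ x ∂(volume.restrict (Set.Ioo (3 * a) π)), q x = 0)
    (ρ : ℂ) (hρ : ρ ≠ 0) (lam : ℂ) (hlam : lam = ρ ^ 2) :
    ∀ ν : ℕ, (ν = 0 ∨ ν = 1) → ∀ j : ℕ, j = 1 - ν →
      (if ν = 0 then deriv (fun x => Yfun a q ρ 1 x) π else Yfun a q ρ 0 π)
        = Complex.cos (ρ * (π : ℂ))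
          + (∫ t in a..π, q t) * Complex.sin (ρ * ((π - a : ℝ) : ℂ)) / (2 * ρ)
          + ((-1) ^ j / (2 * ρ)) *
              ∫ x in a..(3 * a),
                wfun a q ν x * Complex.sin (ρ * ((π - 2 * x + a : ℝ) : ℂ)) := by
  obtain ⟨ha0, haπ3⟩ := ha
  have hπ3 : 3*a < π := by linarith
  haveI : IsFiniteMeasure (volume.restrict (Set.Ioo 0 π)) :=
    ⟨by rw [Measure.restrict_apply_univ]; exact measure_Ioo_lt_top⟩
  have hint : IntegrableOn q (Set.Ioo 0 π) :=
    (hq2.mono_exponent (by norm_num)).integrable le_rfl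
  have hqP : IntegrableOn q (Set.Ioo a π) := hint.mono_set (Set.Ioo_subset_Ioo ha0.le le_rfl)
  have hae : q =ᵐ[volume] qt a q := by
    have h3 : ∀ᵐ x ∂volume, x ∈ Set.Ioo (3*a) π → q x = 0 :=
      (MeasureTheory.ae_restrict_iff' measurableSet_Ioo).1 hq3
    have hne : ∀ᵐ x : ℝ ∂volume, x ≠ 3*a := by
      rw [MeasureTheory.ae_iff]
      simp only [ne_eq, not_not, Set.setOf_eq_eq_singleton]
      exact measure_singleton _
    filter_upwards [h3, hne] with x hx hxne
    unfold qt
    by_cases hmem : x ∈ Set.Ioo a (3*a)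
    · rw [Set.indicator_of_mem hmem]
    · rw [Set.indicator_of_notMem hmem]
      by_cases hπm : x ∈ Set.Ioo a π
      · apply hx
        simp only [Set.mem_Ioo] at hmem hπm ⊢
        push_neg at hmem
        refine ⟨lt_of_le_of_ne (hmem hπm.1) (Ne.symm hxne), hπm.2⟩
      · exact hq0 x hπm
  intro ν hν j hj
  rcases hν with h | h
  · -- derivative case
    subst h
    have hj1 : j = 1 := by simpa using hj
    subst hj1
    simp only [reduceIte]
    show deriv (fun x => Yfun a q ρ 1 x) π
      = cn ρ π + (∫ t in a..π, q t) * sn ρ (π - a) / (2 * ρ)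
        + ((-1 : ℂ) ^ (1:ℕ) / (2 * ρ)) * ∫ x in a..(3 * a), wfun a q 0 x * sn ρ (π - 2*x + a)
    rw [derivYval ha0 hπ3 hρ hqP hq0 hae, RQsplit ha0 hπ3 hρ hqP hq0 hae 0]
    have hc1 := comb1 ha0 hπ3 hρ hqP hq0 hae
    have hc2 := comb2 ha0 hπ3 hρ hqP hq0 hae
    simp only [pow_zero, pow_one]
    linear_combination hc1 + hc2
  · -- value case
    subst h
    have hj0 : j = 0 := by simpa using hj
    subst hj0
    rw [if_neg (by norm_num : ¬(1:ℕ) = 0)]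
    show Yfun a q ρ 0 π
      = cn ρ π + (∫ t in a..π, q t) * sn ρ (π - a) / (2 * ρ)
        + ((-1 : ℂ) ^ (0:ℕ) / (2 * ρ)) * ∫ x in a..(3 * a), wfun a q 1 x * sn ρ (π - 2*x + a)
    have h00 : ySeq a q ρ 0 0 π = cn ρ π := by
      show y0 ρ 0 π = cn ρ π
      unfold y0 cn
      norm_num
    have h01 := T1val ha0 hπ3 hρ hqP hq0 hae
    rw [← ySeq_one] at h01
    have h02 := T2val ha0 hπ3 hρ hqP hq0 hae
    show ySeq a q ρ 0 0 π + ySeq a q ρ 0 1 π + ySeq a q ρ 0 2 π = _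
    rw [h00, h01, h02, RQsplit ha0 hπ3 hρ hqP hq0 hae 1]
    simp only [pow_zero, pow_one]
    ring
end

section
/- Fix a ∈ (0, π/3) and a function q : ℝ → ℂ, square-integrable on (0, π), with q(x) = 0 for all x outside (a, π) and q(x) = 0 for almost every x ∈ (3a, π). Define Q_0(x) = (∫_{x+a/2}^{3a} q(t) dt)(∫_a^{x−a/2} q(τ) dτ) − ∫_a^{7a/2−x} q(t) (∫_{x+t−a/2}^{3a} q(τ) dτ) dt for x ∈ (3a/2, 5a/2), and set w_0(x) = q(x) for x ∈ (a, 3a/2) ∪ (5a/2, 3a) and w_0(x) = q(x) + Q_0(x) for x ∈ (3a/2, 5a/2). Then ∫_a^π q(x) dx = ∫_a^{3a} w_0(x) dx; equivalently, ∫_{3a/2}^{5a/2} Q_0(x) dx = 0. -/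
open MeasureTheory Set
open scoped Real

noncomputable def Ffun (a : ℝ) (q : ℝ → ℂ) (s : ℝ) : ℂ := ∫ τ in s..(3 * a), q τ

lemma Ffun_cont {a : ℝ} {q : ℝ → ℂ} (hq : Integrable q) : Continuous (Ffun a q) := by
  have h : Ffun a q = fun s => (∫ τ in (0:ℝ)..(3 * a), q τ) - ∫ τ in (0:ℝ)..s, q τ := by
    funext s
    have := intervalIntegral.integral_add_adjacent_intervals (a := (0:ℝ)) (b := s) (c := 3 * a)
      hq.intervalIntegrable hq.intervalIntegrable
    rw [Ffun, eq_sub_iff_add_eq, add_comm, this]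
  rw [h]
  exact continuous_const.sub (hq.continuous_primitive 0)

lemma Ffun_bound {a : ℝ} {q : ℝ → ℂ} (hq : Integrable q) (s : ℝ) :
    ‖Ffun a q s‖ ≤ ∫ t, ‖q t‖ :=
  intervalIntegral.norm_integral_le_integral_norm_uIoc.trans
    (setIntegral_le_integral hq.norm (Filter.Eventually.of_forall fun _ => norm_nonneg _))

noncomputable def gg1 (a : ℝ) (q : ℝ → ℂ) (p : ℝ × ℝ) : ℂ := q p.2 * Ffun a q (p.1 + a / 2)

noncomputable def gg2 (a : ℝ) (q : ℝ → ℂ) (p : ℝ × ℝ) : ℂ :=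
  q p.2 * Ffun a q (p.1 + p.2 - a / 2)

def SS1 (a : ℝ) : Set (ℝ × ℝ) :=
  {p | p.1 ∈ Set.Ioc (3 * a / 2) (5 * a / 2) ∧ p.2 ∈ Set.Ioc a (p.1 - a / 2)}

def SS2 (a : ℝ) : Set (ℝ × ℝ) :=
  {p | p.1 ∈ Set.Ioc (3 * a / 2) (5 * a / 2) ∧ p.2 ∈ Set.Ioc a (7 * a / 2 - p.1)}

lemma SS1_meas (a : ℝ) : MeasurableSet (SS1 a) := by
  have : SS1 a = ((fun p : ℝ × ℝ => p.1) ⁻¹' Set.Ioc (3 * a / 2) (5 * a / 2))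
      ∩ ({p : ℝ × ℝ | a < p.2} ∩ {p : ℝ × ℝ | p.2 ≤ p.1 - a / 2}) := by
    ext p; simp [SS1, Set.mem_Ioc]
  rw [this]
  exact (measurable_fst measurableSet_Ioc).inter
    ((measurableSet_lt measurable_const measurable_snd).inter
      (measurableSet_le measurable_snd (measurable_fst.sub measurable_const)))

lemma SS2_meas (a : ℝ) : MeasurableSet (SS2 a) := by
  have : SS2 a = ((fun p : ℝ × ℝ => p.1) ⁻¹' Set.Ioc (3 * a / 2) (5 * a / 2))
      ∩ ({p : ℝ × ℝ | a < p.2} ∩ {p : ℝ × ℝ | p.2 ≤ 7 * a / 2 - p.1}) := by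
    ext p; simp [SS2, Set.mem_Ioc]
  rw [this]
  exact (measurable_fst measurableSet_Ioc).inter
    ((measurableSet_lt measurable_const measurable_snd).inter
      (measurableSet_le measurable_snd ((measurable_const.sub measurable_fst))))

lemma key (a : ℝ) (ha : 0 < a) (q : ℝ → ℂ) (hq : Integrable q) :
    (∫ x in (3 * a / 2)..(5 * a / 2), Qfun a q 0 x) = 0 ∧
    IntervalIntegrable (Qfun a q 0) volume (3 * a / 2) (5 * a / 2) := by
  have hFc : Continuous (Ffun a q) := Ffun_cont hq
  have hC0 : (0 : ℝ) ≤ ∫ t, ‖q t‖ := integral_nonneg fun t => norm_nonneg _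
  -- the dominating function
  have hbound : Integrable (fun p : ℝ × ℝ =>
      ((Set.Ioc (3 * a / 2) (5 * a / 2)).indicator (fun _ => ∫ t, ‖q t‖) p.1) * ‖q p.2‖)
      (volume.prod volume) :=
    Integrable.mul_prod ((integrable_indicator_iff measurableSet_Ioc).2
      (integrableOn_const measure_Ioc_lt_top.ne)) hq.norm
  have hnn : ∀ p : ℝ × ℝ, 0 ≤
      ((Set.Ioc (3 * a / 2) (5 * a / 2)).indicator (fun _ => ∫ t, ‖q t‖) p.1) * ‖q p.2‖ :=
    fun p => mul_nonneg (Set.indicator_nonneg (fun _ _ => hC0) _) (norm_nonneg _)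
  -- integrability of the two kernels
  have hint1 : Integrable ((SS1 a).indicator (gg1 a q)) (volume.prod volume) := by
    refine hbound.mono' (AEStronglyMeasurable.indicator ?_ (SS1_meas a))
      (Filter.Eventually.of_forall fun p => ?_)
    · exact (hq.aestronglyMeasurable.comp_snd).mul
        ((hFc.comp (continuous_fst.add continuous_const)).aestronglyMeasurable)
    · by_cases hp : p ∈ SS1 a
      · rw [Set.indicator_of_mem hp, Set.indicator_of_mem hp.1]
        calc ‖gg1 a q p‖ = ‖q p.2‖ * ‖Ffun a q (p.1 + a / 2)‖ := norm_mul _ _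
          _ ≤ ‖q p.2‖ * ∫ t, ‖q t‖ :=
              mul_le_mul_of_nonneg_left (Ffun_bound hq _) (norm_nonneg _)
          _ = (∫ t, ‖q t‖) * ‖q p.2‖ := mul_comm _ _
      · rw [Set.indicator_of_notMem hp, norm_zero]; exact hnn p
  have hint2 : Integrable ((SS2 a).indicator (gg2 a q)) (volume.prod volume) := by
    refine hbound.mono' (AEStronglyMeasurable.indicator ?_ (SS2_meas a))
      (Filter.Eventually.of_forall fun p => ?_)
    · exact (hq.aestronglyMeasurable.comp_snd).mul
        ((hFc.comp ((continuous_fst.add continuous_snd).sub continuous_const)).aestronglyMeasurable)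
    · by_cases hp : p ∈ SS2 a
      · rw [Set.indicator_of_mem hp, Set.indicator_of_mem hp.1]
        calc ‖gg2 a q p‖ = ‖q p.2‖ * ‖Ffun a q (p.1 + p.2 - a / 2)‖ := norm_mul _ _
          _ ≤ ‖q p.2‖ * ∫ t, ‖q t‖ :=
              mul_le_mul_of_nonneg_left (Ffun_bound hq _) (norm_nonneg _)
          _ = (∫ t, ‖q t‖) * ‖q p.2‖ := mul_comm _ _
      · rw [Set.indicator_of_notMem hp, norm_zero]; exact hnn p
  -- inner (in t) integrals
  have h1x : ∀ x, (∫ t, (SS1 a).indicator (gg1 a q) (x, t))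
      = (Set.Ioc (3 * a / 2) (5 * a / 2)).indicator
          (fun x => (∫ t in Set.Ioc a (x - a / 2), q t) * Ffun a q (x + a / 2)) x := by
    intro x
    by_cases hx : x ∈ Set.Ioc (3 * a / 2) (5 * a / 2)
    · rw [Set.indicator_of_mem hx]
      have h : (fun t => (SS1 a).indicator (gg1 a q) (x, t))
          = (Set.Ioc a (x - a / 2)).indicator (fun t => q t * Ffun a q (x + a / 2)) := by
        funext t
        by_cases ht : t ∈ Set.Ioc a (x - a / 2)
        · rw [Set.indicator_of_mem ht, Set.indicator_of_mem (show (x, t) ∈ SS1 a from ⟨hx, ht⟩)]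
          rfl
        · rw [Set.indicator_of_notMem ht,
            Set.indicator_of_notMem (fun hmem => ht hmem.2)]
      rw [h, integral_indicator measurableSet_Ioc, integral_mul_const]
    · rw [Set.indicator_of_notMem hx]
      have h : (fun t => (SS1 a).indicator (gg1 a q) (x, t)) = fun _ => 0 :=
        funext fun t => Set.indicator_of_notMem (fun hmem => hx hmem.1) _
      rw [h, integral_zero]
  have h2x : ∀ x, (∫ t, (SS2 a).indicator (gg2 a q) (x, t))
      = (Set.Ioc (3 * a / 2) (5 * a / 2)).indicator
          (fun x => ∫ t in Set.Ioc a (7 * a / 2 - x), q t * Ffun a q (x + t - a / 2)) x := by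
    intro x
    by_cases hx : x ∈ Set.Ioc (3 * a / 2) (5 * a / 2)
    · rw [Set.indicator_of_mem hx]
      have h : (fun t => (SS2 a).indicator (gg2 a q) (x, t))
          = (Set.Ioc a (7 * a / 2 - x)).indicator (fun t => q t * Ffun a q (x + t - a / 2)) := by
        funext t
        by_cases ht : t ∈ Set.Ioc a (7 * a / 2 - x)
        · rw [Set.indicator_of_mem ht, Set.indicator_of_mem (show (x, t) ∈ SS2 a from ⟨hx, ht⟩)]
          rfl
        · rw [Set.indicator_of_notMem ht,
            Set.indicator_of_notMem (fun hmem => ht hmem.2)]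
      rw [h, integral_indicator measurableSet_Ioc]
    · rw [Set.indicator_of_notMem hx]
      have h : (fun t => (SS2 a).indicator (gg2 a q) (x, t)) = fun _ => 0 :=
        funext fun t => Set.indicator_of_notMem (fun hmem => hx hmem.1) _
      rw [h, integral_zero]
  -- the inner (in x) integrals agree, for every t
  have hinner : ∀ t, (∫ x, (SS1 a).indicator (gg1 a q) (x, t))
      = ∫ x, (SS2 a).indicator (gg2 a q) (x, t) := by
    intro t
    by_cases hta : a < t
    · have hL : (fun x => (SS1 a).indicator (gg1 a q) (x, t))
          = (Set.Icc (t + a / 2) (5 * a / 2)).indicator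
              (fun x => q t * Ffun a q (x + a / 2)) := by
        funext x
        by_cases hx : x ∈ Set.Icc (t + a / 2) (5 * a / 2)
        · rw [Set.indicator_of_mem hx, Set.indicator_of_mem
            (show (x, t) ∈ SS1 a from
              ⟨⟨by have := hx.1; linarith, hx.2⟩, hta, by have := hx.1; linarith⟩)]
          rfl
        · rw [Set.indicator_of_notMem hx, Set.indicator_of_notMem
            (fun hmem : (x, t) ∈ SS1 a => hx ⟨by have := hmem.2.2; linarith, hmem.1.2⟩)]
      have hR : (fun x => (SS2 a).indicator (gg2 a q) (x, t))
          = (Set.Ioc (3 * a / 2) (7 * a / 2 - t)).indicator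
              (fun x => q t * Ffun a q (x + t - a / 2)) := by
        funext x
        by_cases hx : x ∈ Set.Ioc (3 * a / 2) (7 * a / 2 - t)
        · rw [Set.indicator_of_mem hx, Set.indicator_of_mem
            (show (x, t) ∈ SS2 a from
              ⟨⟨hx.1, by have := hx.2; linarith⟩, hta, by have := hx.2; linarith⟩)]
          rfl
        · rw [Set.indicator_of_notMem hx, Set.indicator_of_notMem
            (fun hmem : (x, t) ∈ SS2 a => hx ⟨hmem.1.1, by have := hmem.2.2; linarith⟩)]
      rw [hL, hR, integral_indicator measurableSet_Icc, integral_indicator measurableSet_Ioc]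
      by_cases ht2 : t ≤ 2 * a
      · rw [integral_Icc_eq_integral_Ioc,
          ← intervalIntegral.integral_of_le (show t + a / 2 ≤ 5 * a / 2 by linarith),
          ← intervalIntegral.integral_of_le (show 3 * a / 2 ≤ 7 * a / 2 - t by linarith),
          intervalIntegral.integral_const_mul, intervalIntegral.integral_const_mul]
        congr 1
        have e1 : (∫ x in (t + a / 2)..(5 * a / 2), Ffun a q (x + a / 2))
            = ∫ u in (t + a / 2 + a / 2)..(5 * a / 2 + a / 2), Ffun a q u :=
          intervalIntegral.integral_comp_add_right (Ffun a q) (a / 2)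
        have e2 : (∫ x in (3 * a / 2)..(7 * a / 2 - t), Ffun a q (x + t - a / 2))
            = ∫ u in (3 * a / 2 + t - a / 2)..(7 * a / 2 - t + t - a / 2), Ffun a q u := by
          have h := intervalIntegral.integral_comp_add_right (a := 3 * a / 2)
            (b := 7 * a / 2 - t) (Ffun a q) (t - a / 2)
          simp only [← add_sub_assoc] at h
          exact h
        rw [e1, e2,
          show t + a / 2 + a / 2 = t + a by ring,
          show 5 * a / 2 + a / 2 = 3 * a by ring,
          show 3 * a / 2 + t - a / 2 = t + a by ring,
          show 7 * a / 2 - t + t - a / 2 = 3 * a by ring]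
      · rw [Set.Icc_eq_empty (show ¬ t + a / 2 ≤ 5 * a / 2 by intro h; exact ht2 (by linarith)),
          Set.Ioc_eq_empty (show ¬ 3 * a / 2 < 7 * a / 2 - t by intro h; exact ht2 (by linarith))]
        simp
    · have hL : (fun x => (SS1 a).indicator (gg1 a q) (x, t)) = fun _ => 0 :=
        funext fun x => Set.indicator_of_notMem (fun hmem => hta hmem.2.1) _
      have hR : (fun x => (SS2 a).indicator (gg2 a q) (x, t)) = fun _ => 0 :=
        funext fun x => Set.indicator_of_notMem (fun hmem => hta hmem.2.1) _
      rw [hL, hR]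
  -- Fubini
  have hswap1 : (∫ x, ∫ t, (SS1 a).indicator (gg1 a q) (x, t))
      = ∫ t, ∫ x, (SS1 a).indicator (gg1 a q) (x, t) :=
    integral_integral_swap (f := fun x t => (SS1 a).indicator (gg1 a q) (x, t)) hint1
  have hswap2 : (∫ x, ∫ t, (SS2 a).indicator (gg2 a q) (x, t))
      = ∫ t, ∫ x, (SS2 a).indicator (gg2 a q) (x, t) :=
    integral_integral_swap (f := fun x t => (SS2 a).indicator (gg2 a q) (x, t)) hint2
  have hdouble : (∫ x, ∫ t, (SS1 a).indicator (gg1 a q) (x, t))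
      = ∫ x, ∫ t, (SS2 a).indicator (gg2 a q) (x, t) := by
    rw [hswap1, hswap2]
    exact integral_congr_ae (Filter.Eventually.of_forall hinner)
  -- identify marginals with the two halves of Qfun
  have hT1eq : (∫ x in (3 * a / 2)..(5 * a / 2),
        Ffun a q (x + a / 2) * ∫ τ in a..(x - a / 2), q τ)
      = ∫ x, ∫ t, (SS1 a).indicator (gg1 a q) (x, t) := by
    have h : (∫ x, ∫ t, (SS1 a).indicator (gg1 a q) (x, t))
        = ∫ x in Set.Ioc (3 * a / 2) (5 * a / 2),
            (∫ t in Set.Ioc a (x - a / 2), q t) * Ffun a q (x + a / 2) := by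
      simp_rw [h1x]
      exact integral_indicator measurableSet_Ioc
    rw [h, intervalIntegral.integral_of_le (show 3 * a / 2 ≤ 5 * a / 2 by linarith)]
    refine setIntegral_congr_fun measurableSet_Ioc fun x hx => ?_
    rw [intervalIntegral.integral_of_le (show a ≤ x - a / 2 by have := hx.1; linarith),
      mul_comm]
  have hT2eq : (∫ x in (3 * a / 2)..(5 * a / 2),
        ∫ t in a..(7 * a / 2 - x), q t * Ffun a q (x + t - a / 2))
      = ∫ x, ∫ t, (SS2 a).indicator (gg2 a q) (x, t) := by
    have h : (∫ x, ∫ t, (SS2 a).indicator (gg2 a q) (x, t))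
        = ∫ x in Set.Ioc (3 * a / 2) (5 * a / 2),
            ∫ t in Set.Ioc a (7 * a / 2 - x), q t * Ffun a q (x + t - a / 2) := by
      simp_rw [h2x]
      exact integral_indicator measurableSet_Ioc
    rw [h, intervalIntegral.integral_of_le (show 3 * a / 2 ≤ 5 * a / 2 by linarith)]
    refine setIntegral_congr_fun measurableSet_Ioc fun x hx => ?_
    rw [intervalIntegral.integral_of_le (show a ≤ 7 * a / 2 - x by have := hx.2; linarith)]
  -- interval integrability of the two halves
  have hT1int : IntervalIntegrable
      (fun x => Ffun a q (x + a / 2) * ∫ τ in a..(x - a / 2), q τ)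
      volume (3 * a / 2) (5 * a / 2) :=
    (((hFc.comp (continuous_add_right (a / 2)))).mul
      ((hq.continuous_primitive a).comp (continuous_sub_right (a / 2)))).intervalIntegrable _ _
  have hT2int : IntervalIntegrable
      (fun x => ∫ t in a..(7 * a / 2 - x), q t * Ffun a q (x + t - a / 2))
      volume (3 * a / 2) (5 * a / 2) := by
    rw [intervalIntegrable_iff_integrableOn_Ioc_of_le (show 3 * a / 2 ≤ 5 * a / 2 by linarith)]
    have hm := hint2.integral_prod_left
    have hm2 : Integrable ((Set.Ioc (3 * a / 2) (5 * a / 2)).indicator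
        (fun x => ∫ t in Set.Ioc a (7 * a / 2 - x), q t * Ffun a q (x + t - a / 2))) volume := by
      refine hm.congr (Filter.Eventually.of_forall fun x => ?_)
      exact h2x x
    have hm3 : IntegrableOn
        (fun x => ∫ t in Set.Ioc a (7 * a / 2 - x), q t * Ffun a q (x + t - a / 2))
        (Set.Ioc (3 * a / 2) (5 * a / 2)) volume :=
      (integrable_indicator_iff measurableSet_Ioc).1 hm2
    refine hm3.congr_fun (fun x hx => ?_) measurableSet_Ioc
    rw [intervalIntegral.integral_of_le (show a ≤ 7 * a / 2 - x by have := hx.2; linarith)]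
  -- assemble
  have hQeq : Qfun a q 0 = fun x =>
      Ffun a q (x + a / 2) * (∫ τ in a..(x - a / 2), q τ)
        - ∫ t in a..(7 * a / 2 - x), q t * Ffun a q (x + t - a / 2) := by
    funext x
    simp only [Qfun, Ffun, pow_zero, one_mul]
  constructor
  · rw [hQeq, intervalIntegral.integral_sub hT1int hT2int, hT1eq, hT2eq, hdouble, sub_self]
  · rw [hQeq]
    exact hT1int.sub hT2int

theorem statement12
    (a : ℝ) (ha : a ∈ Set.Ioo 0 (π / 3))
    (q : ℝ → ℂ)
    (hq2 : MemLp q 2 (volume.restrict (Set.Ioo 0 π)))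
    (hq0 : ∀ x : ℝ, x ∉ Set.Ioo a π → q x = 0)
    (hq3 : ∀ᵐ x ∂(volume.restrict (Set.Ioo (3 * a) π)), q x = 0) :
    (∫ x in a..π, q x) = (∫ x in a..(3 * a), wfun a q 0 x) ∧
    (∫ x in (3 * a / 2)..(5 * a / 2), Qfun a q 0 x) = 0 := by
  obtain ⟨ha0, haπ⟩ := ha
  have hπ : 3 * a < π := by linarith
  have haπ' : a < π := by linarith
  -- q is globally integrable
  haveI : IsFiniteMeasure (volume.restrict (Set.Ioo 0 π)) := by
    constructor
    rw [Measure.restrict_apply_univ]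
    simp [Real.volume_Ioo]
  have hqind : q = (Set.Ioo 0 π).indicator q := by
    funext x
    by_cases hx : x ∈ Set.Ioo 0 π
    · rw [Set.indicator_of_mem hx]
    · rw [Set.indicator_of_notMem hx, hq0]
      intro hx'
      exact hx ⟨lt_trans ha0 hx'.1, hx'.2⟩
  have hqInt : Integrable q := by
    rw [hqind]
    rw [integrable_indicator_iff measurableSet_Ioo]
    exact memLp_one_iff_integrable.mp (hq2.mono_exponent (by norm_num))
  obtain ⟨hkey, hQint⟩ := key a ha0 q hqInt
  refine ⟨?_, hkey⟩
  -- ∫ a..π q = ∫ a..3a q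
  have h1 : (∫ x in a..π, q x) = ∫ x in a..(3 * a), q x := by
    rw [← intervalIntegral.integral_add_adjacent_intervals (a := a) (b := 3 * a) (c := π)
      hqInt.intervalIntegrable hqInt.intervalIntegrable]
    have h0 : (∫ x in (3 * a)..π, q x) = 0 := by
      rw [intervalIntegral.integral_of_le hπ.le, integral_Ioc_eq_integral_Ioo]
      exact integral_eq_zero_of_ae hq3
    rw [h0, add_zero]
  -- wfun decomposition
  have hw : wfun a q 0 = fun x => q x + (Set.Ioo (3 * a / 2) (5 * a / 2)).indicator (Qfun a q 0) x := by
    funext x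
    by_cases hx : x ∈ Set.Ioo (3 * a / 2) (5 * a / 2)
    · rw [wfun, if_pos hx, Set.indicator_of_mem hx]
    · rw [wfun, if_neg hx, Set.indicator_of_notMem hx, add_zero]
  have hQglob : Integrable ((Set.Ioo (3 * a / 2) (5 * a / 2)).indicator (Qfun a q 0)) := by
    rw [integrable_indicator_iff measurableSet_Ioo]
    exact hQint.1.mono_set Set.Ioo_subset_Ioc_self
  have h2 : (∫ x in a..(3 * a), wfun a q 0 x)
      = (∫ x in a..(3 * a), q x) + ∫ x in a..(3 * a),
          (Set.Ioo (3 * a / 2) (5 * a / 2)).indicator (Qfun a q 0) x := by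
    rw [hw, intervalIntegral.integral_add hqInt.intervalIntegrable hQglob.intervalIntegrable]
  have h3 : (∫ x in a..(3 * a),
      (Set.Ioo (3 * a / 2) (5 * a / 2)).indicator (Qfun a q 0) x) = 0 := by
    rw [intervalIntegral.integral_of_le (by linarith), setIntegral_indicator measurableSet_Ioo]
    have hsub : Set.Ioc a (3 * a) ∩ Set.Ioo (3 * a / 2) (5 * a / 2)
        = Set.Ioo (3 * a / 2) (5 * a / 2) := by
      apply Set.inter_eq_self_of_subset_right
      intro x hx
      constructor <;> [linarith [hx.1]; linarith [hx.2]]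
    rw [hsub, ← integral_Ioc_eq_integral_Ioo,
      ← intervalIntegral.integral_of_le (by linarith : 3 * a / 2 ≤ 5 * a / 2)]
    exact hkey
  rw [h1, h2, h3, add_zero]
end

section
/- Fix a ∈ (0, π/3) and a function q : ℝ → ℂ, square-integrable on (0, π), with q(x) = 0 for all x outside (3a/2, 3a). For ν ∈ {0,1} define Q_ν(x) = (∫_{x+a/2}^{3a} q(t) dt)(∫_a^{x−a/2} q(τ) dτ) − (−1)^ν ∫_a^{7a/2−x} q(t) (∫_{x+t−a/2}^{3a} q(τ) dτ) dt for x ∈ (3a/2, 5a/2), and set w_ν(x) = q(x) for x ∈ (a, 3a/2) ∪ (5a/2, 3a) and w_ν(x) = q(x) + Q_ν(x) for x ∈ (3a/2, 5a/2). Let K_q(x) = ∫_x^{3a} q(τ) dτ and (M_q f)(x) = ∫_{3a/2}^{7a/2−x} K_q(x + t − a/2) f(t) dt. Then for every ν ∈ {0,1}: w_ν(x) = 0 for x ∈ (a, 3a/2); w_ν(x) = q(x) − (−1)^ν (M_q q)(x) for x ∈ (3a/2, 2a); w_ν(x) = q(x) + K_q(x + a/2) ∫_{3a/2}^{x−a/2}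 q(t) dt for x ∈ (2a, 5a/2); and w_ν(x) = q(x) for x ∈ (5a/2, 3a). -/
open MeasureTheory Set
open scoped Real

noncomputable def Kfun (a : ℝ) (h : ℝ → ℂ) (x : ℝ) : ℂ := ∫ τ in x..(3 * a), h τ

noncomputable def Mop (a : ℝ) (h f : ℝ → ℂ) (x : ℝ) : ℂ :=
  ∫ t in (3 * a / 2)..(7 * a / 2 - x), Kfun a h (x + t - a / 2) * f t

theorem statement13
    (a : ℝ) (ha : a ∈ Set.Ioo 0 (π / 3))
    (q : ℝ → ℂ)
    (hq2 : MemLp q 2 (volume.restrict (Set.Ioo 0 π)))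
    (hq0 : ∀ x : ℝ, x ∉ Set.Ioo (3 * a / 2) (3 * a) → q x = 0) :
    ∀ ν : ℕ, (ν = 0 ∨ ν = 1) →
      (∀ x ∈ Set.Ioo a (3 * a / 2), wfun a q ν x = 0) ∧
      (∀ x ∈ Set.Ioo (3 * a / 2) (2 * a),
        wfun a q ν x = q x - (-1) ^ ν * Mop a q q x) ∧
      (∀ x ∈ Set.Ioo (2 * a) (5 * a / 2),
        wfun a q ν x = q x + Kfun a q (x + a / 2) * ∫ t in (3 * a / 2)..(x - a / 2), q t) ∧
      (∀ x ∈ Set.Ioo (5 * a / 2) (3 * a), wfun a q ν x = q x) := by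
  obtain ⟨ha0, haπ⟩ := ha
  have h3a : 3 * a < π := by linarith
  -- q vanishes on (-∞, 3a/2]
  have hqz : ∀ t : ℝ, t ≤ 3 * a / 2 → q t = 0 := fun t ht =>
    hq0 t (by simp only [Set.mem_Ioo, not_and, not_lt]; intro h; linarith)
  -- q is integrable on ℝ
  have hIoo : Set.Ioo (3 * a / 2) (3 * a) ⊆ Set.Ioo 0 π :=
    fun x hx => ⟨by nlinarith [hx.1], lt_trans hx.2 h3a⟩
  have hmem : MemLp q 2 (volume.restrict (Set.Ioo (3 * a / 2) (3 * a))) :=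
    hq2.mono_measure (Measure.restrict_mono hIoo le_rfl)
  haveI : Fact (volume (Set.Ioo (3 * a / 2) (3 * a)) < ⊤) := ⟨measure_Ioo_lt_top⟩
  have hIntOn : IntegrableOn q (Set.Ioo (3 * a / 2) (3 * a)) :=
    hmem.integrable one_le_two
  have hInt : Integrable q := by
    have hq_eq : q = (Set.Ioo (3 * a / 2) (3 * a)).indicator q := by
      funext t
      by_cases h : t ∈ Set.Ioo (3 * a / 2) (3 * a)
      · simp [Set.indicator_of_mem h]
      · simp [Set.indicator_of_notMem h, hq0 t h]
    rw [hq_eq]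
    exact (integrable_indicator_iff measurableSet_Ioo).2 hIntOn
  have hII : ∀ u v : ℝ, IntervalIntegrable q volume u v :=
    fun u v => hInt.intervalIntegrable
  -- Kfun is continuous
  have hKcont : Continuous (Kfun a q) := by
    have : Kfun a q = fun y => (∫ τ in (0:ℝ)..(3 * a), q τ) - ∫ τ in (0:ℝ)..y, q τ := by
      funext y
      rw [Kfun, intervalIntegral.integral_interval_sub_left (hII 0 (3 * a)) (hII 0 y)]
    rw [this]
    exact continuous_const.sub (hInt.continuous_primitive 0)
  -- interval-integrability of the convolution-type integrand
  have hfII : ∀ x u v : ℝ,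
      IntervalIntegrable (fun t => q t * Kfun a q (x + t - a / 2)) volume u v := by
    intro x u v
    exact (hII u v).mul_continuousOn
      ((hKcont.comp (by continuity)).continuousOn)
  -- vanishing of interval integrals of q over intervals left of 3a/2
  have hzero : ∀ (f : ℝ → ℂ) (u v : ℝ), (∀ t ∈ Set.uIcc u v, f t = 0) →
      (∫ t in u..v, f t) = 0 := by
    intro f u v hf
    rw [intervalIntegral.integral_congr (g := fun _ => 0) hf]
    simp
  intro ν hν
  refine ⟨?_, ?_, ?_, ?_⟩
  · intro x hx
    obtain ⟨hx1, hx2⟩ := hx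
    rw [wfun, if_neg (by simp only [Set.mem_Ioo, not_and, not_lt]; intro h; linarith)]
    exact hqz x hx2.le
  · intro x hx
    obtain ⟨hx1, hx2⟩ := hx
    rw [wfun, if_pos ⟨hx1, by linarith⟩, Qfun]
    have h1 : (∫ τ in a..(x - a / 2), q τ) = 0 := by
      apply hzero
      intro t ht
      rw [Set.uIcc_of_le (by linarith)] at ht
      exact hqz t (by linarith [ht.2])
    have hsplit : (∫ t in a..(7 * a / 2 - x), q t * Kfun a q (x + t - a / 2)) =
        (∫ t in a..(3 * a / 2), q t * Kfun a q (x + t - a / 2)) +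
        ∫ t in (3 * a / 2)..(7 * a / 2 - x), q t * Kfun a q (x + t - a / 2) :=
      (intervalIntegral.integral_add_adjacent_intervals (hfII x _ _) (hfII x _ _)).symm
    have h2 : (∫ t in a..(3 * a / 2), q t * Kfun a q (x + t - a / 2)) = 0 := by
      apply hzero
      intro t ht
      rw [Set.uIcc_of_le (by linarith)] at ht
      rw [hqz t ht.2, zero_mul]
    have hMop : Mop a q q x =
        ∫ t in (3 * a / 2)..(7 * a / 2 - x), q t * Kfun a q (x + t - a / 2) := by
      rw [Mop]
      exact intervalIntegral.integral_congr fun t _ => mul_comm _ _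
    show q x + ((∫ t in (x + a / 2)..(3 * a), q t) * (∫ τ in a..(x - a / 2), q τ) -
        (-1) ^ ν * ∫ t in a..(7 * a / 2 - x), q t * Kfun a q (x + t - a / 2)) = _
    rw [h1, hsplit, h2, hMop]
    ring
  · intro x hx
    obtain ⟨hx1, hx2⟩ := hx
    rw [wfun, if_pos ⟨by linarith, hx2⟩, Qfun]
    have h2 : (∫ t in a..(7 * a / 2 - x), q t * Kfun a q (x + t - a / 2)) = 0 := by
      apply hzero
      intro t ht
      rw [Set.uIcc_of_le (by linarith)] at ht
      rw [hqz t (by linarith [ht.2]), zero_mul]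
    have h1 : (∫ τ in a..(x - a / 2), q τ) =
        ∫ τ in (3 * a / 2)..(x - a / 2), q τ := by
      rw [← intervalIntegral.integral_add_adjacent_intervals (hII a (3 * a / 2))
        (hII (3 * a / 2) (x - a / 2))]
      rw [hzero q a (3 * a / 2) fun t ht => by
        rw [Set.uIcc_of_le (by linarith)] at ht; exact hqz t ht.2]
      ring
    show q x + ((∫ t in (x + a / 2)..(3 * a), q t) * (∫ τ in a..(x - a / 2), q τ) -
        (-1) ^ ν * ∫ t in a..(7 * a / 2 - x), q t * Kfun a q (x + t - a / 2)) = _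
    rw [h1, h2, Kfun]
    ring
  · intro x hx
    obtain ⟨hx1, hx2⟩ := hx
    rw [wfun, if_neg (by simp only [Set.mem_Ioo, not_and, not_lt]; intro h; linarith)]
end

section
/- Fix a ∈ (0, π/3) and ν ∈ {0,1}. Let h_ν : ℝ → ℝ be square-integrable, vanishing outside (5a/2, 3a), and let e_ν : ℝ → ℂ be square-integrable on (3a/2, 2a) and satisfy (M_{h_ν} e_ν)(x) = (−1)^ν e_ν(x) for almost every x ∈ (3a/2, 2a), where K_{h_ν}(x) = ∫_x^{3a} h_ν(τ) dτ and (M_{h_ν} f)(x) = ∫_{3a/2}^{7a/2−x} K_{h_ν}(x + t − a/2) f(t) dt. For α ∈ ℂ define q_{α,ν} : ℝ → ℂ by: q_{α,ν}(x) = 0 for x ∈ (0, 3a/2); q_{α,ν}(x) = α e_ν(x) for x ∈ (3a/2, 2a); q_{α,ν}(x) = −α K_{h_ν}(x + a/2) ∫_{3a/2}^{x−a/2} e_ν(t) dt for x ∈ (2a, 5a/2); q_{α,ν}(x) = h_ν(x) for x ∈ (5a/2, 3a); and q_{α,ν}(x) = 0 for x ∈ (3a, π) and outside (0, π). Let Q_ν(x)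 = (∫_{x+a/2}^{3a} q_{α,ν}(t) dt)(∫_a^{x−a/2} q_{α,ν}(τ) dτ) − (−1)^ν ∫_a^{7a/2−x} q_{α,ν}(t) (∫_{x+t−a/2}^{3a} q_{α,ν}(τ) dτ) dt for x ∈ (3a/2, 5a/2), and let w_ν(x) = q_{α,ν}(x) for x ∈ (a, 3a/2) ∪ (5a/2, 3a) and w_ν(x) = q_{α,ν}(x) + Q_ν(x) for x ∈ (3a/2, 5a/2). Then for every α ∈ ℂ: w_ν(x) = 0 for almost every x ∈ (a, 5a/2) and w_ν(x) = h_ν(x) for almost every x ∈ (5a/2, 3a); in particular w_ν is independent of α. -/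
open MeasureTheory Set
open scoped Real

noncomputable def qfam (a : ℝ) (h e : ℝ → ℂ) (α : ℂ) (x : ℝ) : ℂ :=
  if x ∈ Set.Ioo (3 * a / 2) (2 * a) then α * e x
  else if x ∈ Set.Ioo (2 * a) (5 * a / 2) then
    -α * Kfun a h (x + a / 2) * (∫ t in (3 * a / 2)..(x - a / 2), e t)
  else if x ∈ Set.Ioo (5 * a / 2) (3 * a) then h x
  else 0

theorem statement14
    (a : ℝ) (ha : a ∈ Set.Ioo 0 (π / 3))
    (ν : ℕ) (hν : ν = 0 ∨ ν = 1)
    (h : ℝ → ℝ)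
    (hh2 : MemLp h 2 volume)
    (hh0 : ∀ x : ℝ, x ∉ Set.Ioo (5 * a / 2) (3 * a) → h x = 0)
    (e : ℝ → ℂ)
    (he2 : MemLp e 2 (volume.restrict (Set.Ioo (3 * a / 2) (2 * a))))
    (heig : ∀ᵐ x ∂(volume.restrict (Set.Ioo (3 * a / 2) (2 * a))),
      Mop a (fun y => (h y : ℂ)) e x = (-1) ^ ν * e x) :
    ∀ α : ℂ,
      (∀ᵐ x ∂(volume.restrict (Set.Ioo a (5 * a / 2))),
        wfun a (qfam a (fun y => (h y : ℂ)) e α) ν x = 0) ∧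
      (∀ᵐ x ∂(volume.restrict (Set.Ioo (5 * a / 2) (3 * a))),
        wfun a (qfam a (fun y => (h y : ℂ)) e α) ν x = (h x : ℂ)) := by
  intro α
  obtain ⟨ha0, -⟩ := ha
  set hc : ℝ → ℂ := fun y => (h y : ℂ) with hc_def
  set q : ℝ → ℂ := qfam a hc e α with hq_def
  -- basic pointwise descriptions of q
  have hq0 : ∀ t : ℝ, t ≤ 3 * a / 2 → q t = 0 := by
    intro t ht
    rw [hq_def, qfam, if_neg, if_neg, if_neg]
    · rintro ⟨h1, h2⟩; linarith
    · rintro ⟨h1, h2⟩; linarith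
    · rintro ⟨h1, h2⟩; linarith
  have hqe : ∀ t : ℝ, t ∈ Set.Ioo (3 * a / 2) (2 * a) → q t = α * e t := by
    intro t ht
    rw [hq_def, qfam, if_pos ht]
  have hqh : ∀ t : ℝ, 5 * a / 2 ≤ t → q t = hc t := by
    intro t ht
    by_cases hmem : t ∈ Set.Ioo (5 * a / 2) (3 * a)
    · rw [hq_def, qfam, if_neg, if_neg, if_pos hmem]
      · rintro ⟨h1, h2⟩; linarith
      · rintro ⟨h1, h2⟩; linarith
    · rw [hq_def, qfam, if_neg, if_neg, if_neg hmem]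
      · rw [hc_def]; simp [hh0 t hmem]
      · rintro ⟨h1, h2⟩; linarith
      · rintro ⟨h1, h2⟩; linarith
  -- integral of q over high intervals equals Kfun of h
  have hKq : ∀ y : ℝ, 5 * a / 2 ≤ y → (∫ τ in y..(3 * a), q τ) = Kfun a hc y := by
    intro y hy
    rw [Kfun]
    refine intervalIntegral.integral_congr_ae (Filter.Eventually.of_forall fun t ht => ?_)
    refine hqh t ?_
    have h1 : min y (3 * a) < t := ht.1
    have : 5 * a / 2 ≤ min y (3 * a) := le_min hy (by linarith)
    linarith
  -- vanishing integrals helper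
  have hIz : ∀ (f : ℝ → ℂ) (c d : ℝ), (∀ t ∈ Set.uIoc c d, f t = 0) → (∫ t in c..d, f t) = 0 := by
    intro f c d hf
    rw [intervalIntegral.integral_congr_ae (g := fun _ => (0 : ℂ))
      (Filter.Eventually.of_forall hf)]
    simp
  have hIq0 : ∀ c d : ℝ, max c d ≤ 3 * a / 2 → (∫ t in c..d, q t) = 0 := by
    intro c d hcd
    exact hIz q c d fun t ht => hq0 t (ht.2.trans hcd)
  -- integrability facts
  have hInth : Integrable hc volume := by
    have hhind : h = (Set.Ioo (5 * a / 2) (3 * a)).indicator h := by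
      funext t
      by_cases hmem : t ∈ Set.Ioo (5 * a / 2) (3 * a)
      · simp [Set.indicator_of_mem hmem]
      · simp [Set.indicator_of_notMem hmem, hh0 t hmem]
    have hon : IntegrableOn h (Set.Ioo (5 * a / 2) (3 * a)) volume :=
      (hh2.restrict _).integrable (by norm_num)
    have hInth' : Integrable h volume := by
      rw [hhind]
      exact (integrable_indicator_iff measurableSet_Ioo).mpr hon
    exact hInth'.ofReal
  have hInte : IntegrableOn e (Set.Ioo (3 * a / 2) (2 * a)) volume :=
    he2.integrable (by norm_num)
  -- Kfun a hc is continuous and bounded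
  have hKcont : Continuous (Kfun a hc) := by
    have heq : (fun t => -∫ τ in (3 * a)..t, hc τ) = Kfun a hc := by
      funext t
      rw [Kfun, intervalIntegral.integral_symm, neg_neg]
    rw [← heq]
    exact (hInth.continuous_primitive (3 * a)).neg
  have hKbd : ∀ y : ℝ, ‖Kfun a hc y‖ ≤ ∫ τ, ‖hc τ‖ := by
    intro y
    calc ‖Kfun a hc y‖ ≤ ∫ τ in Set.uIoc y (3 * a), ‖hc τ‖ :=
          intervalIntegral.norm_integral_le_integral_norm_uIoc
      _ ≤ ∫ τ, ‖hc τ‖ :=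
          setIntegral_le_integral hInth.norm
            (Filter.Eventually.of_forall fun _ => norm_nonneg _)
  constructor
  · -- part 1: w = 0 a.e. on (a, 5a/2)
    rw [ae_restrict_iff' measurableSet_Ioo]
    have heig' := (ae_restrict_iff' measurableSet_Ioo).mp heig
    have h2a : ∀ᵐ x : ℝ ∂volume, x ≠ 2 * a := by
      rw [ae_iff]
      simp only [ne_eq, not_not, setOf_eq_eq_singleton]
      exact measure_singleton _
    filter_upwards [heig', h2a] with x hxeig hxne hmem
    obtain ⟨hma, hmb⟩ := hmem
    rcases le_or_gt x (3 * a / 2) with hle | hgt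
    · rw [wfun, if_neg (by rintro ⟨h1, h2⟩; linarith)]
      exact hq0 x hle
    rcases hxne.lt_or_gt with hlt2a | hgt2a
    · -- case 3a/2 < x < 2a
      have hxIoo : x ∈ Set.Ioo (3 * a / 2) (2 * a) := ⟨hgt, hlt2a⟩
      have hMx := hxeig hxIoo
      have hb1 : (3 : ℝ) * a / 2 ≤ 7 * a / 2 - x := by linarith
      have hb2 : 7 * a / 2 - x < 2 * a := by linarith
      set F : ℝ → ℂ := fun t => q t * ∫ τ in (x + t - a / 2)..(3 * a), q τ with hF_def
      have hA2 : (∫ τ in a..(x - a / 2), q τ) = 0 :=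
        hIq0 _ _ (max_le (by linarith) (by linarith))
      have hsub : Set.Ioc (3 * a / 2) (7 * a / 2 - x) ⊆ Set.Ioo (3 * a / 2) (2 * a) := by
        rintro t ⟨t1, t2⟩; exact ⟨t1, lt_of_le_of_lt t2 hb2⟩
      have hFeq : ∀ t ∈ Set.Ioc (3 * a / 2) (7 * a / 2 - x),
          F t = α * (Kfun a hc (x + t - a / 2) * e t) := by
        intro t ht
        have h1 : q t = α * e t := hqe t (hsub ht)
        have h2 : (∫ τ in (x + t - a / 2)..(3 * a), q τ) = Kfun a hc (x + t - a / 2) :=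
          hKq _ (by have := ht.1; linarith)
        rw [hF_def]; dsimp only; rw [h1, h2]; ring
      have II1 : IntervalIntegrable F volume a (3 * a / 2) := by
        rw [intervalIntegrable_iff_integrableOn_Ioc_of_le (by linarith)]
        refine (integrableOn_congr_fun (g := fun _ => (0 : ℂ)) ?_ measurableSet_Ioc).mpr
          (integrableOn_zero)
        intro t ht
        rw [hF_def]; dsimp only; rw [hq0 t ht.2, zero_mul]
      have II2 : IntervalIntegrable F volume (3 * a / 2) (7 * a / 2 - x) := by
        rw [intervalIntegrable_iff_integrableOn_Ioc_of_le hb1]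
        have hG : IntegrableOn (fun t => Kfun a hc (x + t - a / 2) * (α * e t))
            (Set.Ioc (3 * a / 2) (7 * a / 2 - x)) volume := by
          refine Integrable.bdd_mul (c := ∫ τ, ‖hc τ‖) ((hInte.mono_set hsub).const_mul α) ?_ ?_
          · exact (hKcont.comp ((continuous_const.add continuous_id).sub continuous_const)).aestronglyMeasurable
          · exact Filter.Eventually.of_forall fun t => hKbd _
        refine hG.congr ((ae_restrict_iff' measurableSet_Ioc).mpr
          (Filter.Eventually.of_forall fun t ht => ?_))
        rw [hFeq t ht]; ring
      have hI1 : (∫ t in a..(3 * a / 2), F t) = 0 := by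
        refine hIz F _ _ fun t ht => ?_
        have ht' : t ≤ 3 * a / 2 := ht.2.trans (max_le (by linarith) le_rfl)
        rw [hF_def]; dsimp only; rw [hq0 t ht', zero_mul]
      have hI2 : (∫ t in (3 * a / 2)..(7 * a / 2 - x), F t) = α * Mop a hc e x := by
        rw [intervalIntegral.integral_congr_ae (g := fun t => α * (Kfun a hc (x + t - a / 2) * e t))
          (Filter.Eventually.of_forall fun t ht => hFeq t (by rwa [Set.uIoc_of_le hb1] at ht)),
          intervalIntegral.integral_const_mul, Mop]
      have hB : (∫ t in a..(7 * a / 2 - x), F t) = α * ((-1) ^ ν * e x) := by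
        rw [← intervalIntegral.integral_add_adjacent_intervals II1 II2, hI1, hI2, zero_add, hMx]
      have hqx : q x = α * e x := hqe x hxIoo
      rw [wfun, if_pos ⟨hgt, by linarith⟩, Qfun]
      have hBF : (∫ t in a..(7 * a / 2 - x), q t * ∫ τ in (x + t - a / 2)..(3 * a), q τ)
          = α * ((-1) ^ ν * e x) := hB
      rw [hA2, hBF, hqx, mul_zero]
      rcases hν with h1 | h1 <;> subst h1 <;> ring
    · -- case 2a < x < 5a/2
      have hc1 : 3 * a / 2 < x - a / 2 := by linarith
      have hc2 : x - a / 2 < 2 * a := by linarith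
      have hA1 : (∫ τ in (x + a / 2)..(3 * a), q τ) = Kfun a hc (x + a / 2) :=
        hKq _ (by linarith)
      have hsub : Set.Ioc (3 * a / 2) (x - a / 2) ⊆ Set.Ioo (3 * a / 2) (2 * a) := by
        rintro t ⟨t1, t2⟩; exact ⟨t1, lt_of_le_of_lt t2 hc2⟩
      have II1 : IntervalIntegrable q volume a (3 * a / 2) := by
        rw [intervalIntegrable_iff_integrableOn_Ioc_of_le (by linarith)]
        refine (integrableOn_congr_fun (g := fun _ => (0 : ℂ)) ?_ measurableSet_Ioc).mpr
          (integrableOn_zero)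
        intro t ht
        exact hq0 t ht.2
      have II2 : IntervalIntegrable q volume (3 * a / 2) (x - a / 2) := by
        rw [intervalIntegrable_iff_integrableOn_Ioc_of_le hc1.le]
        refine ((hInte.mono_set hsub).const_mul α).congr
          ((ae_restrict_iff' measurableSet_Ioc).mpr
            (Filter.Eventually.of_forall fun t ht => ?_))
        exact (hqe t (hsub ht)).symm
      have hI1 : (∫ t in a..(3 * a / 2), q t) = 0 := hIq0 _ _ (max_le (by linarith) le_rfl)
      have hI2 : (∫ t in (3 * a / 2)..(x - a / 2), q t)
          = α * ∫ t in (3 * a / 2)..(x - a / 2), e t := by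
        rw [intervalIntegral.integral_congr_ae (g := fun t => α * e t)
          (Filter.Eventually.of_forall fun t ht => hqe t (hsub (by rwa [Set.uIoc_of_le hc1.le] at ht))),
          intervalIntegral.integral_const_mul]
      have hA2 : (∫ τ in a..(x - a / 2), q τ) = α * ∫ t in (3 * a / 2)..(x - a / 2), e t := by
        rw [← intervalIntegral.integral_add_adjacent_intervals II1 II2, hI1, hI2, zero_add]
      have hB : (∫ t in a..(7 * a / 2 - x), q t * ∫ τ in (x + t - a / 2)..(3 * a), q τ) = 0 := by
        refine hIz _ _ _ fun t ht => ?_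
        have ht' : t ≤ 3 * a / 2 := ht.2.trans (max_le (by linarith) (by linarith))
        rw [hq0 t ht', zero_mul]
      have hqx : q x = -α * Kfun a hc (x + a / 2) * ∫ t in (3 * a / 2)..(x - a / 2), e t := by
        rw [hq_def, qfam, if_neg (by rintro ⟨h1, h2⟩; linarith), if_pos ⟨hgt2a, hmb⟩]
      rw [wfun, if_pos ⟨hgt, hmb⟩, Qfun, hA1, hA2, hB, hqx]
      ring
  · -- part 2: w = h a.e. on (5a/2, 3a)
    rw [ae_restrict_iff' measurableSet_Ioo]
    filter_upwards with x hx
    obtain ⟨hx1, hx2⟩ := hx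
    rw [wfun, if_neg (by rintro ⟨h1, h2⟩; linarith)]
    rw [hq_def, qfam, if_neg (by rintro ⟨h1, h2⟩; linarith),
      if_neg (by rintro ⟨h1, h2⟩; linarith), if_pos ⟨hx1, hx2⟩]
end
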